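/- arXiv:0805.2087 — 12 statements merged into one kernel-verified Lean document; each statement's English description precedes it below -/
import Mathlib

section
/- Let X and Y be compact Hausdorff spaces and f : X → Y a continuous map whose point-inverses are all metrizable. If the set C₂f = {y ∈ Y : f⁻¹(y) has more than one point} is countable and Y is metrizable, then X is metrizable. -/
open Set Topology

variable {X Y : Type*} [TopologicalSpace X] [TopologicalSpace Y]

/-- A map is fully closed if images of disjoint closed sets meet in a discrete subspace. -/
def IsFullyClosedMap (f : X → Y) : Prop :=
  ∀ F G : Set X, IsClosed F → IsClosed G → Disjoint F G →
    DiscreteTopology ↥(f '' F ∩ f '' G)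

/-- A map is ring-like if every neighborhood pair admits a smaller neighborhood of the image
point whose frontier has preimage inside the given neighborhood of the point. -/
def IsRingLike (f : X → Y) : Prop :=
  ∀ x : X, ∀ U : Set X, ∀ V : Set Y, IsOpen U → x ∈ U → IsOpen V → f x ∈ V →
    ∃ V' : Set Y, IsOpen V' ∧ f x ∈ V' ∧ V' ⊆ V ∧ f ⁻¹' (frontier V') ⊆ U

/-- A subcontinuum: a compact connected subset. -/
def IsSubcontinuum (A : Set X) : Prop := IsCompact A ∧ IsConnected A

/-- A terminal subcontinuum. -/
def IsTerminalSubcontinuum (A : Set X) : Prop :=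
  IsSubcontinuum A ∧ ∀ B : Set X, IsSubcontinuum B → A ∩ B = ∅ ∨ A ⊆ B ∨ B ⊆ A

/-- An atomic map: point-inverses (of points in the range) are terminal subcontinua. -/
def IsAtomicMap (f : X → Y) : Prop :=
  ∀ y ∈ Set.range f, IsTerminalSubcontinuum (f ⁻¹' {y})

/-- `L` is a partition in `X` between `A` and `B`. -/
def IsPartitionBetween (L A B : Set X) : Prop :=
  IsClosed L ∧ ∃ U V : Set X, IsOpen U ∧ IsOpen V ∧ Disjoint U V ∧
    Lᶜ = U ∪ V ∧ A ⊆ U ∧ B ⊆ V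

/-- Covering dimension at most `n`. -/
def CovDimLE (X : Type*) [TopologicalSpace X] (n : ℕ) : Prop :=
  ∀ (k : ℕ) (U : Fin k → Set X), (∀ i, IsOpen (U i)) → (⋃ i, U i) = Set.univ →
    ∃ (m : ℕ) (V : Fin m → Set X), (∀ j, IsOpen (V j)) ∧ (⋃ j, V j) = Set.univ ∧
      (∀ j, ∃ i, V j ⊆ U i) ∧ ∀ x : X, Set.ncard {j | x ∈ V j} ≤ n + 1

/-- `IndLE n X` means the small inductive dimension of `X` is at most `n - 1`;
in particular `IndLE 0 X` means `X` is empty. -/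
def IndLE : ℕ → (X : Type u) → [TopologicalSpace X] → Prop
  | 0, X, _ => IsEmpty X
  | n+1, X, _ => ∀ (x : X) (V : Set X), IsOpen V → x ∈ V →
      ∃ U : Set X, IsOpen U ∧ x ∈ U ∧ U ⊆ V ∧ IndLE n ↥(frontier U)

/-- For any closed set with metrizable compact subspace there is a countable family of
continuous real functions on the ambient normal space separating its points. -/
theorem sep_family {X : Type*} [TopologicalSpace X] [CompactSpace X] [T2Space X]
    (F : Set X) (hF : IsClosed F) [TopologicalSpace.MetrizableSpace ↥F] :
    ∃ h : ℕ → C(X, ℝ), ∀ a b : X, a ∈ F → b ∈ F → (∀ n, h n a = h n b) → a = b := by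
  letI : MetricSpace ↥F := TopologicalSpace.metrizableSpaceMetric ↥F
  haveI : CompactSpace ↥F := isCompact_iff_compactSpace.mp (hF.isCompact)
  rcases isEmpty_or_nonempty ↥F with hne | hne
  · exact ⟨fun _ => 0, fun a b ha hb _ => (hne.false (⟨a, ha⟩ : ↥F)).elim⟩
  obtain ⟨u, hu⟩ := TopologicalSpace.exists_dense_seq ↥F
  have hext : ∀ n : ℕ, ∃ g : C(X, ℝ), ∀ z : ↥F, g z = dist z (u n) := by
    intro n
    obtain ⟨g, hg⟩ := ContinuousMap.exists_restrict_eq (Y := ℝ) hF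
      ⟨fun z => dist z (u n), (continuous_dist.comp (continuous_id.prodMk continuous_const))⟩
    exact ⟨g, fun z => congrFun (congrArg DFunLike.coe hg) z⟩
  choose h hh using hext
  refine ⟨h, fun a b ha hb hab => ?_⟩
  set a' : ↥F := ⟨a, ha⟩
  set b' : ↥F := ⟨b, hb⟩
  have key : ∀ n, dist a' (u n) = dist b' (u n) := by
    intro n
    have := hab n
    rw [hh n a', hh n b'] at this
    exact this
  have : dist a' b' = 0 := by
    refine le_antisymm (le_of_forall_pos_le_add fun ε hε => ?_) dist_nonneg
    obtain ⟨n, hn⟩ := hu.exists_dist_lt a' (half_pos hε)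
    calc dist a' b' ≤ dist a' (u n) + dist (u n) b' := dist_triangle _ _ _
      _ = dist a' (u n) + dist a' (u n) := by rw [dist_comm (u n) b', ← key n]
      _ ≤ ε/2 + ε/2 := by linarith [hn.le]
      _ = ε := by ring
    linarith
  have := eq_of_dist_eq_zero this
  exact congrArg Subtype.val this


theorem statement0 {X Y : Type*} [TopologicalSpace X] [TopologicalSpace Y]
    [CompactSpace X] [T2Space X] [CompactSpace Y] [T2Space Y]
    [TopologicalSpace.MetrizableSpace Y]
    (f : X → Y) (hf : Continuous f)
    (hfib : ∀ y : Y, TopologicalSpace.MetrizableSpace ↥(f ⁻¹' {y}))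
    (hcount : Set.Countable {y : Y | (f ⁻¹' {y}).Nontrivial}) :
    TopologicalSpace.MetrizableSpace X := by
  set C := {y : Y | (f ⁻¹' {y}).Nontrivial} with hCdef
  haveI : Countable ↥C := hcount.to_subtype
  have key : ∀ y : Y, ∃ h : ℕ → C(X, ℝ),
      ∀ a b : X, a ∈ f ⁻¹' {y} → b ∈ f ⁻¹' {y} → (∀ n, h n a = h n b) → a = b := by
    intro y
    haveI := hfib y
    exact sep_family (f ⁻¹' {y}) (IsClosed.preimage hf isClosed_singleton)
  choose h hh using key
  let g : X → Y × (↥C → ℕ → ℝ) := fun x => (f x, fun c n => h c.1 n x)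
  have hgc : Continuous g := by
    refine hf.prodMk (continuous_pi fun c => continuous_pi fun n => (h c.1 n).continuous)
  have hgi : Function.Injective g := by
    intro a b hab
    have h1 : f a = f b := congrArg Prod.fst hab
    by_cases hy : f a ∈ C
    · have h2 := congrArg Prod.snd hab
      refine hh (f a) a b rfl h1.symm fun n => ?_
      exact congrFun (congrFun h2 ⟨f a, hy⟩) n
    · by_contra hne
      exact hy ⟨a, rfl, b, h1.symm, hne⟩
  exact (hgc.isClosedEmbedding hgi).toIsEmbedding.metrizableSpace
end

section
/- Let X and Y be compact metrizable spaces and f : X → Y a continuous surjective fully closed map. Then the set C₂f = {y ∈ Y : f⁻¹(y) has more than one point} is countable. -/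
open Set Topology

variable {X Y : Type*} [TopologicalSpace X] [TopologicalSpace Y]

open TopologicalSpace

theorem TopologicalSpace.IsTopologicalBasis.exists_disjoint_closure [T25Space X]
    {B : Set (Set X)} (hB : IsTopologicalBasis B) {x₁ x₂ : X} (h : x₁ ≠ x₂) :
    ∃ U ∈ B, ∃ V ∈ B, x₁ ∈ U ∧ x₂ ∈ V ∧ Disjoint (closure U) (closure V) := by
  obtain ⟨U, ⟨hU, hx₁⟩, V, ⟨hV, hx₂⟩, hUV⟩ :=
    (hB.nhds_hasBasis.lift'_closure.disjoint_iff hB.nhds_hasBasis.lift'_closure).mp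
      (disjoint_lift'_closure_nhds.mpr h)
  exact ⟨U, hU, V, hV, hx₁, hx₂, hUV⟩

theorem IsFullyClosedMap.finite_image_inter_image [CompactSpace X] [T2Space Y] {f : X → Y}
    (hfc : IsFullyClosedMap f) (hf : Continuous f) {F G : Set X} (hF : IsClosed F)
    (hG : IsClosed G) (hFG : Disjoint F G) : (f '' F ∩ f '' G).Finite :=
  have : DiscreteTopology ↥(f '' F ∩ f '' G) := hfc F G hF hG hFG
  ((hF.isCompact.image hf).inter_right (hG.isCompact.image hf).isClosed).finite
    (isDiscrete_iff_discreteTopology.mpr this)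

/- Two distinct points of a fibre lie in basic open sets with disjoint closures, and for each of
the countably many such pairs of basic sets only finitely many fibres meet both closures. -/
theorem IsFullyClosedMap.countable_setOf_nontrivial_preimage [CompactSpace X] [T25Space X]
    [SecondCountableTopology X] [T2Space Y] {f : X → Y} (hfc : IsFullyClosedMap f)
    (hf : Continuous f) : {y : Y | (f ⁻¹' {y}).Nontrivial}.Countable := by
  obtain ⟨B, hBc, -, hB⟩ := exists_countable_basis X
  let S := {p : Set X × Set X | p ∈ B ×ˢ B ∧ Disjoint (closure p.1) (closure p.2)}
  have hS : S.Countable := (hBc.prod hBc).mono fun _ hp => hp.1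
  have hcover : {y : Y | (f ⁻¹' {y}).Nontrivial} ⊆
      ⋃ p ∈ S, f '' closure p.1 ∩ f '' closure p.2 := by
    rintro y ⟨x₁, hx₁, x₂, hx₂, hne⟩
    obtain ⟨U, hU, V, hV, hx₁U, hx₂V, hUV⟩ := hB.exists_disjoint_closure hne
    exact mem_biUnion (x := (U, V)) ⟨⟨hU, hV⟩, hUV⟩
      ⟨⟨x₁, subset_closure hx₁U, hx₁⟩, ⟨x₂, subset_closure hx₂V, hx₂⟩⟩
  refine (hS.biUnion fun p hp => ?_).mono hcover
  exact (hfc.finite_image_inter_image hf isClosed_closure isClosed_closure hp.2).countable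

theorem statement1_general {X Y : Type*} [TopologicalSpace X] [TopologicalSpace Y]
    [CompactSpace X] [TopologicalSpace.MetrizableSpace X] [T2Space Y]
    (f : X → Y) (hf : Continuous f) (hfc : IsFullyClosedMap f) :
    Set.Countable {y : Y | (f ⁻¹' {y}).Nontrivial} :=
  hfc.countable_setOf_nontrivial_preimage hf

theorem statement1 {X Y : Type*} [TopologicalSpace X] [TopologicalSpace Y]
    [CompactSpace X] [T2Space X] [TopologicalSpace.MetrizableSpace X]
    [CompactSpace Y] [T2Space Y] [TopologicalSpace.MetrizableSpace Y]
    (f : X → Y) (hf : Continuous f) (hsurj : Function.Surjective f)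
    (hfc : IsFullyClosedMap f) :
    Set.Countable {y : Y | (f ⁻¹' {y}).Nontrivial} :=
  statement1_general f hf hfc
end

section
/- Let f be a continuous closed map from a continuum X (a nonempty connected compact Hausdorff space). Then f is atomic (every point-inverse is a terminal subcontinuum) if and only if for every subcontinuum A ⊆ X such that f(A) is not a single point, A = f⁻¹(f(A)). -/
open Set Topology

variable {X Y : Type*} [TopologicalSpace X] [TopologicalSpace Y]

/-- In a compact Hausdorff space, a connected component contained in an open set is
contained in a clopen set inside that open set. -/
lemma exists_isClopen_of_connectedComponent_subset {Z : Type*} [TopologicalSpace Z]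
    [CompactSpace Z] [T2Space Z] (x : Z) {O : Set Z} (hO : IsOpen O)
    (hC : connectedComponent x ⊆ O) : ∃ E : Set Z, IsClopen E ∧ x ∈ E ∧ E ⊆ O := by
  have H1 := hO.isClosed_compl.isCompact.inter_iInter_nonempty
    (fun s : { s : Set Z // IsClopen s ∧ x ∈ s } => (s : Set Z)) fun s => s.2.1.1
  rw [← not_disjoint_iff_nonempty_inter, imp_not_comm, not_forall] at H1
  obtain ⟨si, H2⟩ := H1 (disjoint_compl_left_iff_subset.2 <| by
    rw [← connectedComponent_eq_iInter_isClopen]; exact hC)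
  refine ⟨⋂ U ∈ si, (U : Set Z), isClopen_biInter_finset fun s _ => s.2.1,
    mem_iInter₂.2 fun s _ => s.2.2, ?_⟩
  rwa [← disjoint_compl_left_iff_subset, disjoint_iff_inter_eq_empty,
    ← not_nonempty_iff_eq_empty]

theorem statement2 {X Y : Type*} [TopologicalSpace X] [TopologicalSpace Y]
    [CompactSpace X] [T2Space X] [ConnectedSpace X] [T2Space Y]
    (f : X → Y) (hf : Continuous f) (hcl : IsClosedMap f) :
    IsAtomicMap f ↔
      ∀ A : Set X, IsSubcontinuum A → (f '' A).Nontrivial → A = f ⁻¹' (f '' A) := by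
  constructor
  · -- atomic → saturation of nondegenerate subcontinua
    intro ha A hA hnt
    refine Subset.antisymm (subset_preimage_image f A) ?_
    intro x hx
    obtain ⟨a, haA, hfa⟩ := hx
    have hterm := ha (f x) ⟨x, rfl⟩
    rcases hterm.2 A hA with hdisj | hsub | hsub
    · exact absurd (by simp [eq_empty_iff_forall_notMem] at hdisj; exact hdisj a hfa haA) (by simp)
    · exact hsub rfl
    · -- A ⊆ fiber : f '' A is a singleton, contradiction
      exfalso
      obtain ⟨y₁, hy₁, y₂, hy₂, hne⟩ := hnt
      obtain ⟨a₁, ha₁, rfl⟩ := hy₁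
      obtain ⟨a₂, ha₂, rfl⟩ := hy₂
      exact hne ((hsub ha₁).trans (hsub ha₂).symm)
  · -- saturation condition → atomic
    intro h y hy
    obtain ⟨x₀, hx₀⟩ := hy
    set F : Set X := f ⁻¹' {y} with hF
    have hFc : IsClosed F := isClosed_singleton.preimage hf
    have hFcp : IsCompact F := hFc.isCompact
    have hFne : F.Nonempty := ⟨x₀, hx₀⟩
    -- key claim: F is preconnected
    have hFpc : IsPreconnected F := by
      by_cases htriv : ∀ x : X, f x = y
      · have : F = univ := eq_univ_of_forall fun x => htriv x
        rw [this]; exact isPreconnected_univ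
      push_neg at htriv
      obtain ⟨xz, hz⟩ := htriv
      by_contra hnc
      unfold IsPreconnected at hnc
      push_neg at hnc
      obtain ⟨u, v, hu, hv, hsub, hne1, hne2, hempty⟩ := hnc
      -- two disjoint nonempty compact pieces of F
      set K₁ : Set X := F \ v with hK₁
      set K₂ : Set X := F \ u with hK₂
      have hK₁c : IsClosed K₁ := hFc.inter hv.isClosed_compl
      have hK₂c : IsClosed K₂ := hFc.inter hu.isClosed_compl
      have hK₁ne : K₁.Nonempty := by
        obtain ⟨a, haF, hau⟩ := hne1
        exact ⟨a, haF, fun hav => (eq_empty_iff_forall_notMem.1 hempty a) ⟨haF, hau, hav⟩⟩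
      have hK₂ne : K₂.Nonempty := by
        obtain ⟨a, haF, hav⟩ := hne2
        exact ⟨a, haF, fun hau => (eq_empty_iff_forall_notMem.1 hempty a) ⟨haF, hau, hav⟩⟩
      have hKdisj : Disjoint K₁ K₂ := by
        rw [disjoint_iff_inter_eq_empty, eq_empty_iff_forall_notMem]
        rintro a ⟨⟨haF, hav⟩, _, hau⟩
        rcases hsub haF with h' | h' <;> [exact hau h'; exact hav h']
      have hFK : F = K₁ ∪ K₂ := by
        apply Subset.antisymm
        · intro a haF
          by_cases hau : a ∈ u
          · exact Or.inl ⟨haF, fun hav => (eq_empty_iff_forall_notMem.1 hempty a) ⟨haF, hau, hav⟩⟩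
          · exact Or.inr ⟨haF, hau⟩
        · rintro a (⟨haF, _⟩ | ⟨haF, _⟩) <;> exact haF
      -- separate by open sets with disjoint closures
      obtain ⟨U₁, U₂, hU₁, hU₂, hKU₁, hKU₂, hUdisj⟩ := normal_separation hK₁c hK₂c hKdisj
      obtain ⟨W₁, hW₁, hKW₁, hclW₁⟩ := normal_exists_closure_subset hK₁c hU₁ hKU₁
      obtain ⟨W₂, hW₂, hKW₂, hclW₂⟩ := normal_exists_closure_subset hK₂c hU₂ hKU₂
      have hcldisj : Disjoint (closure W₁) (closure W₂) := hUdisj.mono hclW₁ hclW₂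
      -- small neighborhood V of y
      set G : Set X := (W₁ ∪ W₂)ᶜ with hG
      have hGc : IsClosed G := (hW₁.union hW₂).isClosed_compl
      obtain ⟨V₂, Wz, hV₂, hWz, hyV₂, hzWz, hdV₂⟩ := t2_separation (Ne.symm hz)
      set V : Set Y := (f '' G)ᶜ ∩ V₂ with hV
      have hVo : IsOpen V := ((hcl G hGc).isOpen_compl).inter hV₂
      have hyV : y ∈ V := by
        refine ⟨?_, hyV₂⟩
        rintro ⟨g, hgG, hgy⟩
        have : g ∈ F := hgy
        rw [hFK] at this
        exact hgG (this.elim (fun h' => Or.inl (hKW₁ h')) (fun h' => Or.inr (hKW₂ h')))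
      have hpreV : f ⁻¹' V ⊆ W₁ ∪ W₂ := by
        intro a haV
        by_contra hag
        exact haV.1 ⟨a, hag, rfl⟩
      set K : Set X := closure (f ⁻¹' V) with hK
      have hKc : IsClosed K := isClosed_closure
      have hKcl : K ⊆ closure W₁ ∪ closure W₂ := by
        calc K ⊆ closure (W₁ ∪ W₂) := closure_mono hpreV
        _ = closure W₁ ∪ closure W₂ := closure_union
      have hzK : xz ∉ K := by
        intro hxzK
        have h1 : f xz ∈ closure V := hf.closure_preimage_subset V hxzK
        have h2 : closure V ⊆ Wzᶜ :=
          closure_minimal (fun w hw => disjoint_left.1 hdV₂ hw.2) hWz.isClosed_compl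
        exact h2 h1 hzWz
      -- the point a in K₁ ∩ F
      obtain ⟨a, haK₁⟩ := hK₁ne
      have haF : a ∈ F := haK₁.1
      have haK : a ∈ K := subset_closure (show a ∈ f ⁻¹' V by rw [mem_preimage, haF]; exact hyV)
      haveI : CompactSpace ↥K := isCompact_iff_compactSpace.mp hKc.isCompact
      set p : ↥K := ⟨a, haK⟩ with hp
      set B : Set X := Subtype.val '' connectedComponent p with hB
      have hBsubK : B ⊆ K := by rintro b ⟨c, _, rfl⟩; exact c.2
      have hBcomp : IsCompact B :=
        (isClosed_connectedComponent.isCompact).image continuous_subtype_val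
      have hBconn : IsConnected B :=
        isConnected_connectedComponent.image _ continuous_subtype_val.continuousOn
      have haB : a ∈ B := ⟨p, mem_connectedComponent, rfl⟩
      -- B must leave f ⁻¹' V
      have hBexit : ∃ b ∈ B, f b ∉ V := by
        by_contra hnb
        push_neg at hnb
        have hBV : B ⊆ f ⁻¹' V := fun b hb => hnb b hb
        have hCO : connectedComponent p ⊆ Subtype.val ⁻¹' (f ⁻¹' V) := fun c hc =>
          hBV ⟨c, hc, rfl⟩
        obtain ⟨E, hE, hpE, hEO⟩ := exists_isClopen_of_connectedComponent_subset p
          ((hVo.preimage hf).preimage continuous_subtype_val) hCO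
        set E' : Set X := Subtype.val '' E with hE'
        have hE'V : E' ⊆ f ⁻¹' V := by rintro b ⟨c, hc, rfl⟩; exact hEO hc
        have hE'closed : IsClosed E' :=
          ((hE.1.isCompact).image continuous_subtype_val).isClosed
        have hE'open : IsOpen E' := by
          obtain ⟨O', hO', hEO'⟩ := isOpen_induced_iff.mp hE.2
          have himg : E' = O' ∩ f ⁻¹' V := by
            apply Subset.antisymm
            · rintro b ⟨c, hc, rfl⟩
              refine ⟨?_, hE'V ⟨c, hc, rfl⟩⟩
              have : c ∈ Subtype.val ⁻¹' O' := by rw [hEO']; exact hc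
              exact this
            · rintro b ⟨hbO, hbV⟩
              have hbK : b ∈ K := subset_closure hbV
              refine ⟨⟨b, hbK⟩, ?_, rfl⟩
              rw [← hEO']; exact hbO
          rw [himg]; exact hO'.inter (hVo.preimage hf)
        have := isClopen_iff.mp ⟨hE'closed, hE'open⟩
        rcases this with h0 | h1
        · exact absurd (show a ∈ E' from ⟨p, hpE, rfl⟩) (by rw [h0]; exact notMem_empty a)
        · exact hzK (subset_closure (hE'V (by rw [h1]; trivial)))
      obtain ⟨b, hbB, hbV⟩ := hBexit
      have hfbne : f b ≠ y := fun he => hbV (he ▸ hyV)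
      -- f '' B is nontrivial, so B is saturated
      have hnt : (f '' B).Nontrivial :=
        ⟨y, ⟨a, haB, haF⟩, f b, ⟨b, hbB, rfl⟩, Ne.symm hfbne⟩
      have hBsat := h B ⟨hBcomp, hBconn⟩ hnt
      have hFB : F ⊆ B := by
        intro x hx
        rw [hBsat, mem_preimage]
        have : f x = y := hx
        rw [this]; exact ⟨a, haB, haF⟩
      -- B lies in closure W₁, contradicting K₂ ⊆ F ⊆ B
      have hBW : B ⊆ closure W₁ ∪ closure W₂ := hBsubK.trans hKcl
      have hBcl : IsClosed B := hBcomp.isClosed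
      have hB1 : B ⊆ closure W₁ := by
        rcases (isPreconnected_iff_subset_of_fully_disjoint_closed hBcl).mp hBconn.2
          (closure W₁) (closure W₂) isClosed_closure isClosed_closure hBW hcldisj with h' | h'
        · exact h'
        · exfalso
          exact disjoint_left.1 hcldisj (subset_closure (hKW₁ haK₁)) (h' haB)
      obtain ⟨c, hcK₂⟩ := hK₂ne
      exact disjoint_left.1 hcldisj (hB1 (hFB hcK₂.1)) (subset_closure (hKW₂ hcK₂))
    -- conclude terminality
    refine ⟨⟨hFcp, hFne, hFpc⟩, ?_⟩
    intro B hB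
    by_cases hdisj : F ∩ B = ∅
    · exact Or.inl hdisj
    by_cases hBF : B ⊆ F
    · exact Or.inr (Or.inr hBF)
    refine Or.inr (Or.inl ?_)
    obtain ⟨b₀, hb₀B, hb₀F⟩ := not_subset.mp hBF
    obtain ⟨c, hcF, hcB⟩ := nonempty_iff_ne_empty.mpr hdisj
    have hfc : f c = y := hcF
    have hnt : (f '' B).Nontrivial :=
      ⟨y, ⟨c, hcB, hfc⟩, f b₀, ⟨b₀, hb₀B, rfl⟩, fun he => hb₀F (by rw [hF, mem_preimage, ← he]; rfl)⟩
    have hBsat := h B hB hnt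
    intro x hx
    rw [hBsat, mem_preimage]
    have : f x = y := hx
    rw [this]; exact ⟨c, hcB, hfc⟩
end

section
/- If f is a ring-like continuous map from a compact Hausdorff space X onto a non-degenerate continuum Y, then X is a continuum and f is an atomic map. -/
open Set Topology

variable {X Y : Type*} [TopologicalSpace X] [TopologicalSpace Y]

section Aux

variable {Z : Type*} [TopologicalSpace Z]

lemma myCompl_frontier {V : Set Z} (hV : IsOpen V) :
    (frontier V)ᶜ = V ∪ (closure V)ᶜ := by
  rw [hV.frontier_eq, Set.diff_eq, Set.compl_inter, compl_compl, Set.union_comm]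

lemma myPreconn_subset {C V : Set Z} (hC : IsPreconnected C)
    (hV : IsOpen V) (hd : C ∩ frontier V = ∅) {z : Z} (hzC : z ∈ C) (hzV : z ∈ V) :
    C ⊆ V := by
  have hsub : C ⊆ V ∪ (closure V)ᶜ := by
    rw [← myCompl_frontier hV]
    intro p hp hpf
    exact (eq_empty_iff_forall_notMem.mp hd) p ⟨hp, hpf⟩
  intro c hc
  by_contra hcV
  have hcc : c ∈ (closure V)ᶜ := (hsub hc).resolve_left hcV
  obtain ⟨p, -, hp1, hp2⟩ := hC V (closure V)ᶜ hV isClosed_closure.isOpen_compl hsub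
    ⟨z, hzC, hzV⟩ ⟨c, hc, hcc⟩
  exact hp2 (subset_closure hp1)

lemma myExists_open_closure {z w : Z} [T2Space Z] (h : w ≠ z) :
    ∃ V : Set Z, IsOpen V ∧ z ∈ V ∧ w ∉ closure V := by
  obtain ⟨W, V, hW, hV, hwW, hzV, hWV⟩ := t2_separation h
  refine ⟨V, hV, hzV, fun hw => ?_⟩
  have : closure V ⊆ Wᶜ := closure_minimal (fun p hp hpW => hWV.le_bot ⟨hpW, hp⟩) hW.isClosed_compl
  exact this hw hwW

lemma myBump {Z : Type*} [TopologicalSpace Z] [CompactSpace Z] [T2Space Z]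
    [PreconnectedSpace Z] {K : Set Z} (hK : IsClosed K) (hKu : K ≠ univ) {b : Z}
    (hb : b ∈ K) : (connectedComponentIn K b ∩ frontier K).Nonempty := by
  haveI : CompactSpace ↥K := isCompact_iff_compactSpace.mp hK.isCompact
  set b' : ↥K := ⟨b, hb⟩ with hb'
  set T : Set ↥K := Subtype.val ⁻¹' frontier K with hT
  have hTc : IsClosed T := isClosed_frontier.preimage continuous_subtype_val
  have key : ∀ W : Set ↥K, IsClopen W → b' ∈ W → (W ∩ T).Nonempty := by
    intro W hW hbW
    by_contra hne
    rw [not_nonempty_iff_eq_empty] at hne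
    obtain ⟨O, hO, hWO⟩ := isOpen_induced_iff.mp hW.isOpen
    have him : Subtype.val '' W = O ∩ K := by
      rw [← hWO, Subtype.image_preimage_coe, Set.inter_comm]
    have hsubint : O ∩ K ⊆ interior K := by
      rintro w ⟨hwO, hwK⟩
      have hwfr : w ∉ frontier K := by
        intro hwf
        have : (⟨w, hwK⟩ : ↥K) ∈ W ∩ T := ⟨by rw [← hWO]; exact hwO, hwf⟩
        rw [hne] at this; exact this
      rw [hK.frontier_eq] at hwfr
      by_contra hint
      exact hwfr ⟨hwK, hint⟩
    have heq : O ∩ K = O ∩ interior K :=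
      Subset.antisymm (fun w hw => ⟨hw.1, hsubint hw⟩)
        (fun w hw => ⟨hw.1, interior_subset hw.2⟩)
    have hclopen : IsClopen (O ∩ K) := by
      constructor
      · rw [← him]
        exact ((hW.isClosed.isCompact).image continuous_subtype_val).isClosed
      · rw [heq]; exact hO.inter isOpen_interior
    rcases isClopen_iff.mp hclopen with h0 | h1
    · have : b ∈ O ∩ K := ⟨by rw [← hWO] at hbW; exact hbW, hb⟩
      rw [h0] at this; exact this
    · exact hKu (univ_subset_iff.mp (h1 ▸ inter_subset_right))
  haveI : Nonempty {s : Set ↥K // IsClopen s ∧ b' ∈ s} :=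
    ⟨⟨univ, isClopen_univ, mem_univ _⟩⟩
  have hdir : Directed (· ⊇ ·)
      (fun i : {s : Set ↥K // IsClopen s ∧ b' ∈ s} => (i : Set ↥K) ∩ T) := by
    intro i j
    refine ⟨⟨(i : Set ↥K) ∩ (j : Set ↥K), i.2.1.inter j.2.1, ⟨i.2.2, j.2.2⟩⟩, ?_, ?_⟩
    · exact inter_subset_inter_left _ inter_subset_left
    · exact inter_subset_inter_left _ inter_subset_right
  have hne := IsCompact.nonempty_iInter_of_directed_nonempty_isCompact_isClosed _ hdir
    (fun i => key i i.2.1 i.2.2)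
    (fun i => (i.2.1.isClosed.inter hTc).isCompact)
    (fun i => i.2.1.isClosed.inter hTc)
  obtain ⟨p, hp⟩ := hne
  have hp1 : p ∈ connectedComponent b' := by
    rw [connectedComponent_eq_iInter_isClopen b']
    exact mem_iInter.mpr fun i => (mem_iInter.mp hp i).1
  have hp2 : (p : Z) ∈ frontier K :=
    (mem_iInter.mp hp ⟨univ, isClopen_univ, mem_univ _⟩).2
  rw [connectedComponentIn_eq_image hb]
  exact ⟨p, ⟨p, hp1, rfl⟩, hp2⟩

end Aux

theorem statement4 {X Y : Type*} [TopologicalSpace X] [TopologicalSpace Y]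
    [CompactSpace X] [T2Space X]
    [CompactSpace Y] [T2Space Y] [ConnectedSpace Y] [Nontrivial Y]
    (f : X → Y) (hf : Continuous f) (hsurj : Function.Surjective f)
    (hr : IsRingLike f) :
    ConnectedSpace X ∧ IsAtomicMap f := by
  obtain ⟨y₀⟩ := (inferInstance : Nonempty Y)
  obtain ⟨x₀, -⟩ := hsurj y₀
  have hXne : Nonempty X := ⟨x₀⟩
  -- a clopen set with full image forces a contradiction
  have case_full : ∀ C : Set X, IsClopen C → Cᶜ.Nonempty → f '' C = univ → False := by
    intro C hC hCc hCu
    obtain ⟨b, hbC⟩ := hCc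
    obtain ⟨w, hw⟩ := exists_ne (f b)
    obtain ⟨P, hP, hzP, hwP⟩ := myExists_open_closure hw
    obtain ⟨V', hV'o, hfbV', hV'P, hpre⟩ := hr b Cᶜ P hC.isClosed.isOpen_compl hbC hP hzP
    have hfr : frontier V' = ∅ := by
      rw [eq_empty_iff_forall_notMem]
      intro w' hw'
      have : w' ∈ f '' C := by rw [hCu]; exact mem_univ _
      obtain ⟨p, hpC, rfl⟩ := this
      exact (hpre hw') hpC
    rcases isClopen_iff.mp (isClopen_iff_frontier_eq_empty.mpr hfr) with h0 | h1
    · rw [h0] at hfbV'; exact hfbV'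
    · exact hwP (subset_closure (hV'P (h1 ▸ mem_univ w)))
  -- every clopen subset of X is trivial
  have hclopen : ∀ A : Set X, IsClopen A → A = ∅ ∨ A = univ := by
    intro A hA
    by_contra hcon
    push_neg at hcon
    obtain ⟨a0, ha0⟩ := hcon.1
    obtain ⟨b0, hb0⟩ := (ne_univ_iff_exists_notMem A).mp hcon.2
    have hFA : f '' A ≠ univ := fun h => case_full A hA ⟨b0, hb0⟩ h
    have hFB : f '' Aᶜ ≠ univ := fun h => case_full Aᶜ hA.compl ⟨a0, by simpa using ha0⟩ h
    have hFAclosed : IsClosed (f '' A) := (hA.isClosed.isCompact.image hf).isClosed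
    have hFBclosed : IsClosed (f '' Aᶜ) := (hA.compl.isClosed.isCompact.image hf).isClosed
    have hcov : ∀ w : Y, w ∉ f '' A → w ∈ f '' Aᶜ := by
      intro w hwA
      obtain ⟨x, rfl⟩ := hsurj w
      by_cases hx : x ∈ A
      · exact absurd ⟨x, hx, rfl⟩ hwA
      · exact ⟨x, hx, rfl⟩
    set K := closure ((f '' A)ᶜ) with hKdef
    have hKsub : K ⊆ f '' Aᶜ := closure_minimal (fun w hw => hcov w hw) hFBclosed
    have hKu : K ≠ univ := by
      obtain ⟨g, hg⟩ := (ne_univ_iff_exists_notMem _).mp hFB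
      exact fun h => hg (hKsub (h ▸ mem_univ g))
    obtain ⟨wb, hwb⟩ := (ne_univ_iff_exists_notMem _).mp hFA
    have hwbK : wb ∈ K := subset_closure hwb
    obtain ⟨zs, hzsC, hzsfr⟩ := myBump isClosed_closure hKu hwbK
    have hfrA : frontier K ⊆ f '' A := by
      intro w hwfr
      by_contra hwA
      have hint : w ∈ interior K :=
        interior_maximal subset_closure hFAclosed.isOpen_compl hwA
      exact hwfr.2 hint
    have hzsK : zs ∈ K := by
      have := frontier_subset_closure hzsfr
      rwa [isClosed_closure.closure_eq] at this
    obtain ⟨a, haA, hfa⟩ := hfrA hzsfr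
    have hsing : connectedComponentIn K zs ⊆ {zs} := by
      intro c hc
      by_contra hcz
      have hczs : c ≠ zs := by simpa using hcz
      obtain ⟨V', hV'o, hzV', hV'sub, hpreV⟩ := hr a A {c}ᶜ hA.isOpen haA
        isOpen_compl_singleton (by rw [hfa]; simp [Ne.symm hczs])
      rw [hfa] at hzV'
      have hKfr : K ∩ frontier V' = ∅ := by
        rw [eq_empty_iff_forall_notMem]
        rintro w ⟨hwK, hwfr⟩
        obtain ⟨pb, hpbB, rfl⟩ := hKsub hwK
        exact hpbB (hpreV hwfr)
      have hCfr : connectedComponentIn K zs ∩ frontier V' = ∅ :=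
        eq_empty_of_subset_empty
          (hKfr ▸ inter_subset_inter_left _ (connectedComponentIn_subset K zs))
      have hsub := myPreconn_subset isPreconnected_connectedComponentIn hV'o hCfr
        (mem_connectedComponentIn hzsK) hzV'
      exact (hV'sub (hsub hc)) rfl
    have hwbzs : wb = zs := by
      have h1 : connectedComponentIn K wb = connectedComponentIn K zs :=
        connectedComponentIn_eq hzsC
      have := hsing (h1 ▸ mem_connectedComponentIn hwbK)
      simpa using this
    exact hwb (hwbzs ▸ hfrA hzsfr)
  -- X is preconnected
  have hpreX : PreconnectedSpace X := by
    constructor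
    intro u v hu hv hcov hune hvne
    by_contra hne
    rw [not_nonempty_iff_eq_empty] at hne
    have huv : u ∩ v = ∅ := by
      rw [eq_empty_iff_forall_notMem]
      intro w hw
      exact (eq_empty_iff_forall_notMem.mp hne) w ⟨mem_univ w, hw⟩
    have hcompl : uᶜ = v := by
      ext w
      constructor
      · intro hwu
        rcases hcov (mem_univ w) with h | h
        · exact absurd h hwu
        · exact h
      · intro hwv hwu
        exact (eq_empty_iff_forall_notMem.mp huv) w ⟨hwu, hwv⟩
    have hclo : IsClopen u := ⟨isOpen_compl_iff.mp (by rw [hcompl]; exact hv), hu⟩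
    rcases hclopen u hclo with h | h
    · obtain ⟨p, -, hp⟩ := hune
      rw [h] at hp; exact hp
    · obtain ⟨q, -, hq⟩ := hvne
      have : q ∈ uᶜ := hcompl ▸ hq
      rw [h] at this; exact this (mem_univ q)
  haveI := hpreX
  -- fibers are preconnected
  have hfiber : ∀ y : Y, IsPreconnected (f ⁻¹' {y}) := by
    intro y
    by_contra hnc
    unfold IsPreconnected at hnc
    push_neg at hnc
    obtain ⟨u, v, hu, hv, hcov, hne1, hne2, hempty'⟩ := hnc
    set F := f ⁻¹' {y} with hF
    have hFclosed : IsClosed F := isClosed_singleton.preimage hf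
    have hempty : F ∩ (u ∩ v) = ∅ := hempty'
    obtain ⟨p, hpF, hpu⟩ := hne1
    obtain ⟨q, hqF, hqv⟩ := hne2
    have hpv : p ∉ v := fun h => (eq_empty_iff_forall_notMem.mp hempty) p ⟨hpF, hpu, h⟩
    have hqu : q ∉ u := fun h => (eq_empty_iff_forall_notMem.mp hempty) q ⟨hqF, h, hqv⟩
    have hd : Disjoint (F \ v) (F \ u) := by
      rw [disjoint_iff_inter_eq_empty, eq_empty_iff_forall_notMem]
      rintro w ⟨⟨hwF, hwv⟩, ⟨-, hwu⟩⟩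
      rcases hcov hwF with h | h
      · exact hwu h
      · exact hwv h
    obtain ⟨U₁, U₂, hU₁, hU₂, hsub₁, hsub₂, hU₁₂⟩ :=
      SeparatedNhds.of_isCompact_isCompact (hFclosed.sdiff hv).isCompact
        (hFclosed.sdiff hu).isCompact hd
    have hpU₁ : p ∈ U₁ := hsub₁ ⟨hpF, hpv⟩
    have hqU₂ : q ∈ U₂ := hsub₂ ⟨hqF, hqu⟩
    have hFsub : F ⊆ U₁ ∪ U₂ := by
      intro w hw
      by_cases hwu : w ∈ u
      · exact Or.inl (hsub₁ ⟨hw, fun hv' =>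
          (eq_empty_iff_forall_notMem.mp hempty) w ⟨hw, hwu, hv'⟩⟩)
      · rcases hcov hw with h | h
        · exact absurd h hwu
        · exact Or.inr (hsub₂ ⟨hw, hwu⟩)
    have hfp : f p = y := hpF
    have hfq : f q = y := hqF
    obtain ⟨z, hz⟩ := exists_ne y
    obtain ⟨V₀, hV₀, hyV₀, hzV₀⟩ := myExists_open_closure hz
    obtain ⟨V₁, hV₁o, hyV₁, hV₁sub, hpre₁⟩ := hr p U₁ V₀ hU₁ hpU₁ hV₀
      (by rw [hfp]; exact hyV₀)
    rw [hfp] at hyV₁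
    set M := f ⁻¹' (closure V₁) \ (U₁ ∪ U₂) with hM
    have hMclosed : IsClosed M := (isClosed_closure.preimage hf).sdiff (hU₁.union hU₂)
    have hfMclosed : IsClosed (f '' M) := (hMclosed.isCompact.image hf).isClosed
    have hyfM : y ∉ f '' M := by
      rintro ⟨m, hm, hfm⟩
      rcases hFsub (show m ∈ F from hfm) with h | h
      · exact hm.2 (Or.inl h)
      · exact hm.2 (Or.inr h)
    obtain ⟨W, hWo, hyW, hWsub, hpre₂⟩ := hr q U₂ (V₁ ∩ (f '' M)ᶜ) hU₂ hqU₂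
      (hV₁o.inter hfMclosed.isOpen_compl) (by rw [hfq]; exact ⟨hyV₁, hyfM⟩)
    rw [hfq] at hyW
    set N := f ⁻¹' (closure W) with hN
    have hNclosed : IsClosed N := isClosed_closure.preimage hf
    have hWfr : ∀ w, w ∈ closure W → w ∉ W → w ∈ frontier W := fun w h1 h2 =>
      ⟨h1, by rwa [hWo.interior_eq]⟩
    have hNsub : N ⊆ U₁ ∪ U₂ := by
      intro p' hp'
      by_cases hw : f p' ∈ W
      · have h1 := hWsub hw
        have h2 : p' ∈ f ⁻¹' (closure V₁) := subset_closure h1.1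
        by_contra hp'U
        exact h1.2 ⟨p', ⟨h2, hp'U⟩, rfl⟩
      · exact Or.inr (hpre₂ (hWfr _ hp' hw))
    have hNu : N ≠ univ := by
      obtain ⟨xz, hxz⟩ := hsurj z
      intro h
      have h1 : xz ∈ N := h ▸ mem_univ xz
      have h2 : z ∈ closure W := by rw [← hxz]; exact h1
      exact hzV₀ (closure_mono (fun w hw => hV₁sub (hWsub hw).1) h2)
    have hpN : p ∈ N := subset_closure (show f p ∈ W by rw [hfp]; exact hyW)
    obtain ⟨c, hcC, hcfr⟩ := myBump hNclosed hNu hpN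
    have hcU₂ : c ∈ U₂ := by
      have hcN : c ∈ N := by
        have := frontier_subset_closure hcfr
        rwa [hNclosed.closure_eq] at this
      have hcW : c ∉ f ⁻¹' W := by
        intro hcw
        exact hcfr.2 (interior_maximal (show f ⁻¹' W ⊆ N from fun w hw => subset_closure hw) (hWo.preimage hf) hcw)
      exact hpre₂ (hWfr _ hcN hcW)
    obtain ⟨w, -, hw1, hw2⟩ := (isPreconnected_connectedComponentIn :
        IsPreconnected (connectedComponentIn N p)) U₁ U₂ hU₁ hU₂
      (subset_trans (connectedComponentIn_subset N p) hNsub)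
      ⟨p, mem_connectedComponentIn hpN, hpU₁⟩ ⟨c, hcC, hcU₂⟩
    rw [disjoint_iff_inter_eq_empty] at hU₁₂
    exact (eq_empty_iff_forall_notMem.mp hU₁₂) w ⟨hw1, hw2⟩
  refine ⟨⟨hXne⟩, ?_⟩
  intro y _
  have hFclosed : IsClosed (f ⁻¹' {y}) := isClosed_singleton.preimage hf
  obtain ⟨x₁, hx₁⟩ := hsurj y
  have hFne : (f ⁻¹' {y}).Nonempty := ⟨x₁, hx₁⟩
  refine ⟨⟨hFclosed.isCompact, hFne, hfiber y⟩, ?_⟩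
  intro B hB
  by_cases h1 : f ⁻¹' {y} ∩ B = ∅
  · exact Or.inl h1
  by_cases h2 : B ⊆ f ⁻¹' {y}
  · exact Or.inr (Or.inr h2)
  refine Or.inr (Or.inl fun x hxF => ?_)
  by_contra hxB
  obtain ⟨p0, hp0F, hp0B⟩ := nonempty_iff_ne_empty.mpr h1
  obtain ⟨b, hbB, hbF⟩ := not_subset.mp h2
  have hBclosed : IsClosed B := hB.1.isClosed
  have hfb : f b ≠ y := by simpa using hbF
  obtain ⟨V, hVo, hyV, hfbV⟩ := myExists_open_closure hfb
  have hfx : f x = y := hxF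
  obtain ⟨V', hV'o, hyV', hV'V, hpre'⟩ := hr x Bᶜ V hBclosed.isOpen_compl hxB hVo
    (by rw [hfx]; exact hyV)
  rw [hfx] at hyV'
  have hfBpre : IsPreconnected (f '' B) := hB.2.2.image f hf.continuousOn
  have hdisj : f '' B ∩ frontier V' = ∅ := by
    rw [eq_empty_iff_forall_notMem]
    rintro w ⟨⟨pb, hpbB, rfl⟩, hwfr⟩
    exact (hpre' hwfr) hpbB
  have hsubV' : f '' B ⊆ V' :=
    myPreconn_subset hfBpre hV'o hdisj ⟨p0, hp0B, hp0F⟩ hyV'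
  exact hfbV (subset_closure (hV'V (hsubV' ⟨b, hbB, rfl⟩)))
end

section
/- Let f : X → Y be a closed, continuous, monotone surjection between topological spaces, and let A, B ⊆ Y be disjoint closed sets. If L is a partition in X between f⁻¹(A) and f⁻¹(B), then f(L) is a partition in Y between A and B. -/
open Set Topology

variable {X Y : Type*} [TopologicalSpace X] [TopologicalSpace Y]

theorem statement5 {X Y : Type*} [TopologicalSpace X] [TopologicalSpace Y]
    (f : X → Y) (hf : Continuous f) (hcl : IsClosedMap f)
    (hsurj : Function.Surjective f)
    (hmono : ∀ y : Y, IsConnected (f ⁻¹' {y}))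
    (A B : Set Y) (hA : IsClosed A) (hB : IsClosed B) (hAB : Disjoint A B)
    (L : Set X) (hL : IsPartitionBetween L (f ⁻¹' A) (f ⁻¹' B)) :
    IsPartitionBetween (f '' L) A B := by
  obtain ⟨hLcl, U, V, hU, hV, hUV, hcompl, hAU, hBV⟩ := hL
  refine ⟨hcl L hLcl, (f '' Uᶜ)ᶜ, (f '' Vᶜ)ᶜ, (hcl _ hU.isClosed_compl).isOpen_compl,
    (hcl _ hV.isClosed_compl).isOpen_compl, ?_, ?_, ?_, ?_⟩
  · -- disjointness
    rw [Set.disjoint_left]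
    intro y hyU hyV
    simp only [Set.mem_compl_iff, Set.mem_image, not_exists, not_and] at hyU hyV
    obtain ⟨x, hx⟩ := hsurj y
    rcases Classical.em (x ∈ U) with h | h
    · have : x ∈ Lᶜ := by rw [hcompl]; exact Or.inl h
      have hxv : x ∉ V := Set.disjoint_left.mp hUV h
      exact hyV x hxv hx
    · exact hyU x h hx
  · -- complement equality
    ext y
    simp only [Set.mem_compl_iff, Set.mem_union, Set.mem_image, not_exists, not_and]
    constructor
    · intro hy
      -- fiber of y misses L, so fiber ⊆ U ∪ V
      have hfib : f ⁻¹' {y} ⊆ U ∪ V := by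
        intro x hx
        have : x ∈ Lᶜ := fun hxL => hy x hxL hx
        rw [hcompl] at this; exact this
      rcases (hmono y).isPreconnected.subset_or_subset hU hV hUV hfib with h | h
      · left; intro x hxU hx
        exact hxU (h (by simpa using hx))
      · right; intro x hxV hx
        exact hxV (h (by simpa using hx))
    · rintro (h | h) x hxL hx
      · have hxU : x ∈ U := by
          by_contra hxU
          exact h x hxU hx
        have : x ∈ Lᶜ := by rw [hcompl]; exact Or.inl hxU
        exact this hxL
      · have hxV : x ∈ V := by
          by_contra hxV
          exact h x hxV hx
        have : x ∈ Lᶜ := by rw [hcompl]; exact Or.inr hxV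
        exact this hxL
  · -- A ⊆ (f '' Uᶜ)ᶜ
    intro y hy
    simp only [Set.mem_compl_iff, Set.mem_image, not_exists, not_and]
    intro x hxU hx
    exact hxU (hAU (by simp [hx, hy]))
  · intro y hy
    simp only [Set.mem_compl_iff, Set.mem_image, not_exists, not_and]
    intro x hxV hx
    exact hxV (hBV (by simp [hx, hy]))
end

section
/- Let X, Y, Z be compact Hausdorff spaces and f : X → Y, g : Y → Z surjective ring-like maps. If g is monotone (all fibers connected), then the composition g ∘ f is ring-like. -/
open Set Topology

variable {X Y : Type*} [TopologicalSpace X] [TopologicalSpace Y]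

/-- A preconnected set meeting the closure of an open set and the complement of the open set
must meet its frontier. -/
theorem conn_frontier_aux {α : Type*} [TopologicalSpace α] {S W : Set α}
    (hS : IsPreconnected S) (hW : IsOpen W)
    (h1 : (S ∩ closure W).Nonempty) (h2 : (S \ W).Nonempty) :
    (S ∩ frontier W).Nonempty := by
  by_contra hF
  rw [Set.not_nonempty_iff_eq_empty] at hF
  have hnF : ∀ y ∈ S, y ∉ frontier W := fun y hy hyF =>
    (Set.eq_empty_iff_forall_notMem.mp hF y) ⟨hy, hyF⟩
  have hcov : S ⊆ W ∪ (closure W)ᶜ := by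
    intro y hy
    by_cases hyW : y ∈ W
    · exact Or.inl hyW
    · refine Or.inr fun hyc => hnF y hy ?_
      rw [hW.frontier_eq]; exact ⟨hyc, hyW⟩
  obtain ⟨a, haS, hacl⟩ := h1
  have haW : a ∈ W := by
    by_contra h
    exact hnF a haS (by rw [hW.frontier_eq]; exact ⟨hacl, h⟩)
  obtain ⟨b, hbS, hbW⟩ := h2
  have hbcl : b ∉ closure W := fun h => hnF b hbS (by rw [hW.frontier_eq]; exact ⟨h, hbW⟩)
  obtain ⟨c, _, hcW, hccl⟩ := hS W (closure W)ᶜ hW isClosed_closure.isOpen_compl hcov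
    ⟨a, haS, haW⟩ ⟨b, hbS, hbcl⟩
  exact hccl (subset_closure hcW)

theorem statement6 {X Y Z : Type*} [TopologicalSpace X] [TopologicalSpace Y]
    [TopologicalSpace Z] [CompactSpace X] [T2Space X] [CompactSpace Y] [T2Space Y]
    [CompactSpace Z] [T2Space Z]
    (f : X → Y) (g : Y → Z) (hf : Continuous f) (hg : Continuous g)
    (hfs : Function.Surjective f) (hgs : Function.Surjective g)
    (hrf : IsRingLike f) (hrg : IsRingLike g)
    (hmono : ∀ z : Z, IsConnected (g ⁻¹' {z})) :
    IsRingLike (g ∘ f) := by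
  intro x U V hU hxU hV hxV
  classical
  set B : Set Y := f '' Uᶜ with hBdef
  have hBcpt : IsCompact B := (hU.isClosed_compl.isCompact).image hf
  have hBcl : IsClosed B := hBcpt.isClosed
  have hxV' : g (f x) ∈ V := hxV
  -- producer of small neighborhoods of f x whose frontier misses B
  have hW : ∀ N : Set Y, IsOpen N → f x ∈ N →
      ∃ W : Set Y, IsOpen W ∧ f x ∈ W ∧ W ⊆ N ∧ ∀ y ∈ frontier W, y ∉ B := by
    intro N hN hyN
    obtain ⟨W, hWo, hWm, hWs, hWpre⟩ := hrf x U N hU hxU hN hyN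
    refine ⟨W, hWo, hWm, hWs, fun y hy hyB => ?_⟩
    obtain ⟨x', hx'U, rfl⟩ := hyB
    exact hx'U (hWpre hy)
  by_cases hK : g ⁻¹' {g (f x)} ⊆ B
  · -- Case 2 : the whole fiber of g over g (f x) lies in B
    -- Step 1: the fiber is the singleton {f x}
    have hK1 : g ⁻¹' {g (f x)} = {f x} := by
      apply Subset.antisymm
      · intro y' hy'
        rw [mem_singleton_iff]
        by_contra hne
        obtain ⟨M, N, hMo, hNo, hy'M, hy0N, hMN⟩ := t2_separation hne
        obtain ⟨W, hWo, hWm, hWs, hWB⟩ := hW N hNo hy0N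
        have hKconn : IsPreconnected (g ⁻¹' {g (f x)}) := (hmono _).isPreconnected
        obtain ⟨y4, hy4K, hy4F⟩ := conn_frontier_aux hKconn hWo
          ⟨f x, rfl, subset_closure hWm⟩
          ⟨y', hy', fun h => Set.disjoint_left.mp hMN hy'M (hWs h)⟩
        exact hWB y4 hy4F (hK hy4K)
      · intro y hy
        rw [mem_singleton_iff] at hy
        subst hy; rfl
    have hy0B : f x ∈ B := hK rfl
    set Bg : Set Y := g ⁻¹' (g '' B) with hBgdef
    have hBgcl : IsClosed Bg := ((hBcpt.image hg).isClosed).preimage hg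
    have hy0Bg : f x ∈ Bg := ⟨f x, hy0B, rfl⟩
    -- Step 2: the connected component of f x in Bg is trivial
    have hC : connectedComponentIn Bg (f x) = {f x} := by
      apply Subset.antisymm
      · intro y3 hy3
        rw [mem_singleton_iff]
        by_contra hne
        obtain ⟨M, N, hMo, hNo, hy3M, hy0N, hMN⟩ := t2_separation hne
        obtain ⟨W, hWo, hWm, hWs, hWB⟩ := hW N hNo hy0N
        obtain ⟨y4, hy4C, hy4F⟩ := conn_frontier_aux
          (isPreconnected_connectedComponentIn (x := f x) (F := Bg)) hWo
          ⟨f x, mem_connectedComponentIn hy0Bg, subset_closure hWm⟩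
          ⟨y3, hy3, fun h => Set.disjoint_left.mp hMN hy3M (hWs h)⟩
        have hy4B : y4 ∉ B := hWB y4 hy4F
        have hy4Bg : y4 ∈ Bg := connectedComponentIn_subset _ _ hy4C
        -- every neighborhood of g y4 contains g (f x)
        have hz : ∀ V4 : Set Z, IsOpen V4 → g y4 ∈ V4 → g (f x) ∈ V4 := by
          intro V4 h4o h4m
          obtain ⟨V5, h5o, h5m, h5s, h5pre⟩ :=
            hrg y4 Bᶜ V4 hBcl.isOpen_compl hy4B h4o h4m
          by_contra hz0
          have hz0V5 : g (f x) ∉ V5 := fun h => hz0 (h5s h)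
          have hSconn : IsPreconnected (g '' connectedComponentIn Bg (f x)) :=
            (isPreconnected_connectedComponentIn).image g hg.continuousOn
          obtain ⟨t, htS, htF⟩ := conn_frontier_aux hSconn h5o
            ⟨g y4, ⟨y4, hy4C, rfl⟩, subset_closure h5m⟩
            ⟨g (f x), ⟨f x, mem_connectedComponentIn hy0Bg, rfl⟩, hz0V5⟩
          obtain ⟨yc, hycC, hyct⟩ := htS
          obtain ⟨b, hbB, hbt⟩ := (connectedComponentIn_subset _ _ hycC : yc ∈ Bg)
          have hbmem : b ∈ g ⁻¹' frontier V5 := by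
            rw [mem_preimage, hbt, hyct]; exact htF
          exact h5pre hbmem hbB
        have hz40 : g y4 = g (f x) := by
          by_contra hne2
          obtain ⟨P, Q, hPo, hQo, hP, hQ, hPQ⟩ := t2_separation hne2
          exact Set.disjoint_left.mp hPQ (hz P hPo hP) hQ
        have hy4K : y4 ∈ g ⁻¹' {g (f x)} := hz40
        rw [hK1, mem_singleton_iff] at hy4K
        rw [hWo.frontier_eq] at hy4F
        exact hy4F.2 (hy4K ▸ hWm)
      · exact singleton_subset_iff.mpr (mem_connectedComponentIn hy0Bg)
    -- Step 3: extract a clopen neighborhood in the compact space Bg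
    haveI : CompactSpace ↥Bg := isCompact_iff_compactSpace.mp hBgcl.isCompact
    have hcc : connectedComponent (⟨f x, hy0Bg⟩ : ↥Bg) = {⟨f x, hy0Bg⟩} := by
      refine (Set.image_injective.mpr Subtype.coe_injective) ?_
      rw [← connectedComponentIn_eq_image hy0Bg, hC]
      simp
    have hGo : IsOpen (Subtype.val ⁻¹' (g ⁻¹' V) : Set ↥Bg) :=
      (hV.preimage hg).preimage continuous_subtype_val
    have hptG : (⟨f x, hy0Bg⟩ : ↥Bg) ∈ (Subtype.val ⁻¹' (g ⁻¹' V) : Set ↥Bg) := hxV'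
    have hFcpt : IsCompact ((Subtype.val ⁻¹' (g ⁻¹' V) : Set ↥Bg)ᶜ) :=
      hGo.isClosed_compl.isCompact
    have hempty : ((Subtype.val ⁻¹' (g ⁻¹' V) : Set ↥Bg)ᶜ ∩
        ⋂ s : { s : Set ↥Bg // IsClopen s ∧ (⟨f x, hy0Bg⟩ : ↥Bg) ∈ s }, (s : Set ↥Bg)) = ∅ := by
      rw [← connectedComponent_eq_iInter_isClopen (⟨f x, hy0Bg⟩ : ↥Bg), hcc]
      apply Set.eq_empty_iff_forall_notMem.mpr
      rintro a ⟨ha1, ha2⟩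
      rw [mem_singleton_iff] at ha2
      exact ha1 (ha2 ▸ hptG)
    obtain ⟨u, hu⟩ := hFcpt.elim_finite_subfamily_closed
      (fun s : { s : Set ↥Bg // IsClopen s ∧ (⟨f x, hy0Bg⟩ : ↥Bg) ∈ s } => (s : Set ↥Bg))
      (fun s => s.2.1.1) hempty
    set Q : Set ↥Bg := ⋂ s ∈ u, (s : Set ↥Bg) with hQdef
    have hQclopen : IsClopen Q := isClopen_biInter_finset (fun s _ => s.2.1)
    have hptQ : (⟨f x, hy0Bg⟩ : ↥Bg) ∈ Q := mem_iInter₂.mpr fun s _ => s.2.2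
    have hQG : Q ⊆ (Subtype.val ⁻¹' (g ⁻¹' V) : Set ↥Bg) := by
      intro a haQ
      by_contra haG
      have hmem : a ∈ (Subtype.val ⁻¹' (g ⁻¹' V) : Set ↥Bg)ᶜ ∩
          ⋂ s ∈ u, ((s : { s : Set ↥Bg // IsClopen s ∧ (⟨f x, hy0Bg⟩ : ↥Bg) ∈ s }) : Set ↥Bg) :=
        ⟨haG, haQ⟩
      rw [hu] at hmem
      exact hmem
    -- Step 4: separate Q from its complement inside Y and build Ws
    have hQcpt : IsCompact (Subtype.val '' Q : Set Y) :=
      (hQclopen.isClosed.isCompact).image continuous_subtype_val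
    have hQccpt : IsCompact (Subtype.val '' Qᶜ : Set Y) :=
      (hQclopen.isOpen.isClosed_compl.isCompact).image continuous_subtype_val
    have hdisj : Disjoint (Subtype.val '' Q : Set Y) (Subtype.val '' Qᶜ) :=
      (Set.disjoint_image_iff Subtype.coe_injective).mpr disjoint_compl_right
    obtain ⟨W0, W1, hW0o, hW1o, hsub0, hsub1, hW01⟩ :=
      SeparatedNhds.of_isCompact_isCompact hQcpt hQccpt hdisj
    set Ws : Set Y := W0 ∩ g ⁻¹' V with hWsdef
    have hWso : IsOpen Ws := hW0o.inter (hV.preimage hg)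
    have hy0Ws : f x ∈ Ws := ⟨hsub0 ⟨⟨f x, hy0Bg⟩, hptQ, rfl⟩, hxV'⟩
    have hWsBg : ∀ y ∈ frontier Ws, y ∉ Bg := by
      intro y hyF hyBg
      by_cases hq : (⟨y, hyBg⟩ : ↥Bg) ∈ Q
      · have hyWs : y ∈ Ws := ⟨hsub0 ⟨_, hq, rfl⟩, hQG hq⟩
        rw [hWso.frontier_eq] at hyF
        exact hyF.2 hyWs
      · have hyW1 : y ∈ W1 := hsub1 ⟨_, hq, rfl⟩
        have hycl : y ∉ closure Ws := by
          intro hyc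
          obtain ⟨w, hwW1, hwWs⟩ := mem_closure_iff.mp hyc W1 hW1o hyW1
          exact Set.disjoint_left.mp hW01 hwWs.1 hwW1
        exact hycl (frontier_subset_closure hyF)
    -- Step 5: the desired open set
    have hV'o : IsOpen ((g '' Wsᶜ)ᶜ) :=
      ((hWso.isClosed_compl.isCompact.image hg).isClosed).isOpen_compl
    refine ⟨(g '' Wsᶜ)ᶜ, hV'o, ?_, ?_, ?_⟩
    · intro h
      obtain ⟨y, hyWs, hgy⟩ := h
      have h2 : y ∈ g ⁻¹' {g (f x)} := hgy
      rw [hK1, mem_singleton_iff] at h2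
      exact hyWs (by rw [h2]; exact hy0Ws)
    · intro z hz
      obtain ⟨y, rfl⟩ := hgs z
      by_cases hyWs : y ∈ Ws
      · exact hyWs.2
      · exact absurd ⟨y, hyWs, rfl⟩ hz
    · intro x' hx'
      by_contra hx'U
      have hbB : f x' ∈ B := ⟨x', hx'U, rfl⟩
      have hzF : g (f x') ∈ frontier ((g '' Wsᶜ)ᶜ) := hx'
      have hfibBg : g ⁻¹' {g (f x')} ⊆ Bg := by
        intro y hy
        have hgy : g y = g (f x') := hy
        show g y ∈ g '' B
        rw [hgy]
        exact ⟨f x', hbB, rfl⟩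
      have hzF' : g (f x') ∈ closure ((g '' Wsᶜ)ᶜ) \ (g '' Wsᶜ)ᶜ := by
        rw [← hV'o.frontier_eq]; exact hzF
      have hzimg : g (f x') ∈ g '' Wsᶜ := by simpa using hzF'.2
      obtain ⟨y', hy'Ws, hy'z⟩ := hzimg
      -- the fiber of g (f x') meets the closure of Ws
      have hmeet : (g ⁻¹' {g (f x')} ∩ closure Ws).Nonempty := by
        by_contra hemp
        rw [Set.not_nonempty_iff_eq_empty] at hemp
        have hzM : g (f x') ∉ g '' closure Ws := by
          rintro ⟨yc, hyc, hycz⟩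
          have hmem2 : yc ∈ g ⁻¹' {g (f x')} ∩ closure Ws := ⟨hycz, hyc⟩
          rw [hemp] at hmem2
          exact hmem2
        have hMo : IsOpen ((g '' closure Ws)ᶜ) :=
          ((isClosed_closure.isCompact.image hg).isClosed).isOpen_compl
        obtain ⟨t, htM, htV'⟩ := mem_closure_iff.mp hzF'.1 _ hMo hzM
        obtain ⟨yt, hyt⟩ := hgs t
        have hytWs : yt ∈ Ws := by
          by_contra h
          exact htV' ⟨yt, h, hyt⟩
        exact htM ⟨yt, subset_closure hytWs, hyt⟩
      have hfibconn : IsPreconnected (g ⁻¹' {g (f x')}) := (hmono _).isPreconnected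
      obtain ⟨w, hwfib, hwF⟩ := conn_frontier_aux hfibconn hWso hmeet
        ⟨y', hy'z, hy'Ws⟩
      exact hWsBg w hwF (hfibBg hwfib)
  · -- Case 1 : some point of the fiber has its f-preimage inside U
    obtain ⟨y1, hy1K, hy1B⟩ := not_subset.mp hK
    have hgy1 : g y1 = g (f x) := hy1K
    obtain ⟨V', hV'o, hy1V', hV'V, hpre⟩ :=
      hrg y1 Bᶜ V hBcl.isOpen_compl hy1B hV (by rw [hgy1]; exact hxV')
    refine ⟨V', hV'o, ?_, hV'V, ?_⟩
    · show g (f x) ∈ V'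
      rw [← hgy1]; exact hy1V'
    · intro x' hx'
      by_contra hx'U
      exact hpre (show f x' ∈ g ⁻¹' frontier V' from hx') ⟨x', hx'U, rfl⟩
end

section
/- Let X be a compact Hausdorff space, f : X → Y a surjective ring-like map, and g : Y → Z a surjective monotone map all of whose fibers have more than one point. If every partition in Y (i.e., every closed set whose complement in Y is disconnected) contains some fiber g⁻¹(z), then every partition in X contains some fiber of the composition g ∘ f. -/
open Set Topology

variable {X Y : Type*} [TopologicalSpace X] [TopologicalSpace Y]

/-- Key consequence of ring-likeness: if `x ∈ U'` open, then no nontrivial preconnected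
subset of `f '' U'ᶜ` contains `f x`. -/
lemma ringlike_key {X Y : Type*} [TopologicalSpace X] [TopologicalSpace Y] [T1Space Y]
    (f : X → Y) (hrf : IsRingLike f) (U' : Set X) (hU' : IsOpen U')
    (x : X) (hx : x ∈ U') (T : Set Y) (hT : IsPreconnected T)
    (hTsub : T ⊆ f '' U'ᶜ) (hyT : f x ∈ T) (p : Y) (hpT : p ∈ T) (hpne : p ≠ f x) :
    False := by
  obtain ⟨V', hV'open, hfxV', hV'sub, hfr⟩ :=
    hrf x U' {p}ᶜ hU' hx isOpen_compl_singleton (by simpa using hpne.symm)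
  have hTfr : ∀ y₀ ∈ T, y₀ ∉ frontier V' := by
    intro y₀ hy₀ hfr'
    obtain ⟨x₀, hx₀, hfx₀⟩ := hTsub hy₀
    exact hx₀ (hfr (show x₀ ∈ f ⁻¹' frontier V' by
      simp only [Set.mem_preimage, hfx₀]; exact hfr'))
  have hmemV' : ∀ y₀ ∈ T, y₀ ∈ closure V' → y₀ ∈ V' := by
    intro y₀ hy₀ hcl
    by_contra hnot
    exact hTfr y₀ hy₀ (by rw [hV'open.frontier_eq]; exact ⟨hcl, hnot⟩)
  have hcov : T ⊆ V' ∪ (closure V')ᶜ := by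
    intro y₀ hy₀
    by_cases h : y₀ ∈ closure V'
    · exact Or.inl (hmemV' y₀ hy₀ h)
    · exact Or.inr h
  have hpcl : p ∉ closure V' := by
    intro h
    exact hV'sub (hmemV' p hpT h) rfl
  obtain ⟨w, hw⟩ := hT V' (closure V')ᶜ hV'open isClosed_closure.isOpen_compl hcov
    ⟨f x, hyT, hfxV'⟩ ⟨p, hpT, hpcl⟩
  exact hw.2.2 (subset_closure hw.2.1)

theorem statement7 {X Y Z : Type*} [TopologicalSpace X] [TopologicalSpace Y]
    [TopologicalSpace Z] [CompactSpace X] [T2Space X] [CompactSpace Y] [T2Space Y]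
    [CompactSpace Z] [T2Space Z]
    (f : X → Y) (g : Y → Z) (hf : Continuous f) (hg : Continuous g)
    (hfs : Function.Surjective f) (hgs : Function.Surjective g)
    (hrf : IsRingLike f)
    (hmono : ∀ z : Z, IsConnected (g ⁻¹' {z}))
    (hnt : ∀ z : Z, (g ⁻¹' {z}).Nontrivial)
    (hpart : ∀ L : Set Y, IsClosed L → ¬ IsPreconnected (Lᶜ : Set Y) →
      ∃ z : Z, g ⁻¹' {z} ⊆ L) :
    ∀ L : Set X, IsClosed L → ¬ IsPreconnected (Lᶜ : Set X) →
      ∃ z : Z, (g ∘ f) ⁻¹' {z} ⊆ L := by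
  intro L hL hLc
  -- Y is preconnected
  have hYpre : IsPreconnected (Set.univ : Set Y) := by
    by_contra h
    obtain ⟨z, hz⟩ := hpart ∅ isClosed_empty (by rwa [compl_empty])
    obtain ⟨y, hy, _⟩ := hnt z
    exact hz hy
  -- extract the separating open sets
  rw [IsPreconnected] at hLc
  push_neg at hLc
  obtain ⟨u, v, hu, hv, hcov, ⟨a, haL, hau⟩, ⟨b, hbL, hbv⟩, hdisj⟩ := hLc
  set U' : Set X := u ∩ Lᶜ with hU'def
  set V' : Set X := v ∩ Lᶜ with hV'def
  have hU'open : IsOpen U' := hu.inter hL.isOpen_compl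
  have hV'open : IsOpen V' := hv.inter hL.isOpen_compl
  have hUV : U' ∩ V' = ∅ := by
    apply Set.eq_empty_iff_forall_notMem.2
    rintro x ⟨⟨hxu, hxL⟩, ⟨hxv, _⟩⟩
    exact Set.eq_empty_iff_forall_notMem.1 hdisj x ⟨hxL, hxu, hxv⟩
  have hunion : U' ∪ V' = Lᶜ := by
    apply Set.Subset.antisymm
    · rintro x (⟨_, h⟩ | ⟨_, h⟩) <;> exact h
    · intro x hx
      rcases hcov hx with h | h
      · exact Or.inl ⟨h, hx⟩
      · exact Or.inr ⟨h, hx⟩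
  have haU' : a ∈ U' := ⟨hau, haL⟩
  have hbV' : b ∈ V' := ⟨hbv, hbL⟩
  -- Y is nontrivial
  have hYnt : Nontrivial Y := by
    obtain ⟨p, _, q, _, hpq⟩ := hnt (g (f a))
    exact ⟨⟨p, q, hpq⟩⟩
  -- the open sets of points whose fibers lie in U' resp. V'
  have hfc : IsClosedMap f := hf.isClosedMap
  set OU : Set Y := (f '' U'ᶜ)ᶜ with hOUdef
  set OV : Set Y := (f '' V'ᶜ)ᶜ with hOVdef
  have hOUopen : IsOpen OU := (hfc _ hU'open.isClosed_compl).isOpen_compl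
  have hOVopen : IsOpen OV := (hfc _ hV'open.isClosed_compl).isOpen_compl
  -- nonemptiness via the key lemma
  have hne : ∀ (W : Set X), IsOpen W → ∀ x : X, x ∈ W → ((f '' Wᶜ)ᶜ).Nonempty := by
    intro W hW x hxW
    by_contra h
    rw [Set.not_nonempty_iff_eq_empty, compl_empty_iff] at h
    obtain ⟨p, hpne⟩ := exists_ne (f x)
    exact ringlike_key f hrf W hW x hxW Set.univ hYpre
      (by rw [h]) (Set.mem_univ _) p (Set.mem_univ _) hpne
  have hOUne : OU.Nonempty := hne U' hU'open a haU'
  have hOVne : OV.Nonempty := hne V' hV'open b hbV'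
  have hOUV : OU ∩ OV = ∅ := by
    apply Set.eq_empty_iff_forall_notMem.2
    rintro y ⟨hyU, hyV⟩
    obtain ⟨x, hx⟩ := hfs y
    have hxU : x ∈ U' := by
      by_contra h
      exact hyU ⟨x, h, hx⟩
    have hxV : x ∈ V' := by
      by_contra h
      exact hyV ⟨x, h, hx⟩
    exact Set.eq_empty_iff_forall_notMem.1 hUV x ⟨hxU, hxV⟩
  -- the partition in Y
  obtain ⟨z, hz⟩ := hpart (OU ∪ OV)ᶜ (hOUopen.union hOVopen).isClosed_compl (by
    rw [compl_compl]
    intro h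
    obtain ⟨w, hw⟩ := h OU OV hOUopen hOVopen Set.Subset.rfl
      ⟨hOUne.choose, Or.inl hOUne.choose_spec, hOUne.choose_spec⟩
      ⟨hOVne.choose, Or.inr hOVne.choose_spec, hOVne.choose_spec⟩
    exact Set.eq_empty_iff_forall_notMem.1 hOUV w hw.2)
  refine ⟨z, ?_⟩
  intro x' hx'
  have hgfx : g (f x') = z := hx'
  by_contra hx'L
  have hx'c : x' ∈ U' ∪ V' := by rw [hunion]; exact hx'L
  set T : Set Y := g ⁻¹' {z} with hTdef
  have hTpre : IsPreconnected T := (hmono z).isPreconnected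
  have hfx'T : f x' ∈ T := hgfx
  obtain ⟨p, hpT, hpne⟩ := (hnt z).exists_ne (f x')
  rcases hx'c with h | h
  · have hTsub : T ⊆ f '' U'ᶜ := by
      intro y hy
      have := hz hy
      rw [Set.mem_compl_iff, Set.mem_union, not_or] at this
      have h1 : y ∈ f '' U'ᶜ := by
        have := this.1
        rwa [hOUdef, Set.mem_compl_iff, not_not] at this
      exact h1
    exact ringlike_key f hrf U' hU'open x' h T hTpre hTsub hfx'T p hpT hpne
  · have hTsub : T ⊆ f '' V'ᶜ := by
      intro y hy
      have := hz hy
      rw [Set.mem_compl_iff, Set.mem_union, not_or] at this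
      have h1 : y ∈ f '' V'ᶜ := by
        have := this.2
        rwa [hOVdef, Set.mem_compl_iff, not_not] at this
      exact h1
    exact ringlike_key f hrf V' hV'open x' h T hTpre hTsub hfx'T p hpT hpne
end

section
/- If f is a ring-like continuous map from a compact Hausdorff space X, then the covering dimension of f(X) is at most the covering dimension of X. -/
open Set Topology

variable {X Y : Type*} [TopologicalSpace X] [TopologicalSpace Y]

theorem statement8 {X Y : Type*} [TopologicalSpace X] [TopologicalSpace Y]
    [CompactSpace X] [T2Space X] [T2Space Y]
    (f : X → Y) (hf : Continuous f) (hsurj : Function.Surjective f)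
    (hr : IsRingLike f) (n : ℕ) (h : CovDimLE X n) :
    CovDimLE Y n := by
  classical
  intro k U hUo hUcov
  have hYc : CompactSpace Y := by
    constructor
    have h1 := isCompact_range hf
    rwa [hsurj.range_eq] at h1
  have hclosed : IsClosedMap f := hf.isClosedMap
  -- Pull back the cover and refine it in X with order ≤ n+1
  obtain ⟨m, V, hVo, hVcov, hVref, hVord⟩ :=
    h k (fun i => f ⁻¹' U i) (fun i => (hUo i).preimage hf)
      (by rw [← preimage_iUnion, hUcov, preimage_univ])
  choose ι hι using hVref
  -- Merge the refinement by target index: same-index shrinking W of f⁻¹U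
  set W : Fin k → Set X := fun i => ⋃ j ∈ {j | ι j = i}, V j with hWdef
  have hWo : ∀ i, IsOpen (W i) := fun i => isOpen_biUnion fun j _ => hVo j
  have hWmem : ∀ i x, x ∈ W i ↔ ∃ j, ι j = i ∧ x ∈ V j := by
    intro i x
    simp only [hWdef, mem_iUnion, mem_setOf_eq, exists_prop]
  have hWsub : ∀ i, W i ⊆ f ⁻¹' U i := by
    intro i x hx
    obtain ⟨j, hji, hxj⟩ := (hWmem i x).1 hx
    rw [← hji]
    exact hι j hxj
  have hWcov : (⋃ i, W i) = univ := by
    apply eq_univ_of_forall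
    intro x
    have hx : x ∈ ⋃ j, V j := by rw [hVcov]; exact mem_univ x
    obtain ⟨j, hj⟩ := mem_iUnion.1 hx
    exact mem_iUnion.2 ⟨ι j, (hWmem _ x).2 ⟨j, rfl, hj⟩⟩
  have hWord : ∀ x : X, {i | x ∈ W i}.ncard ≤ n + 1 := by
    intro x
    have h1 : {i | x ∈ W i} ⊆ ι '' {j | x ∈ V j} := by
      intro i hi
      obtain ⟨j, hji, hxj⟩ := (hWmem i x).1 hi
      exact ⟨j, hxj, hji⟩
    calc {i | x ∈ W i}.ncard ≤ (ι '' {j | x ∈ V j}).ncard :=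
          Set.ncard_le_ncard h1 (Set.toFinite _)
      _ ≤ {j | x ∈ V j}.ncard := Set.ncard_image_le (Set.toFinite _)
      _ ≤ n + 1 := hVord x
  -- Closed shrinking of W
  obtain ⟨v, hvcov, hvo, hvcl⟩ :=
    exists_subset_iUnion_closure_subset isClosed_univ hWo
      (fun x _ => Set.toFinite _) (by rw [hWcov])
  -- Q i : the points whose whole fiber lies in W i
  set Q : Fin k → Set Y := fun i => (f '' (W i)ᶜ)ᶜ with hQdef
  have hQo : ∀ i, IsOpen (Q i) := fun i =>
    (hclosed _ (hWo i).isClosed_compl).isOpen_compl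
  have hQmem : ∀ i y, y ∈ Q i ↔ ∀ x, f x = y → x ∈ W i := by
    intro i y
    simp only [hQdef, mem_compl_iff, mem_image, not_exists]
    constructor
    · intro hy x hxy
      by_contra hx
      exact hy x ⟨hx, hxy⟩
    · rintro h1 x ⟨hx, hxy⟩
      exact hx (h1 x hxy)
  have hQsub : ∀ i, Q i ⊆ U i := by
    intro i z hz
    obtain ⟨x, hx⟩ := hsurj z
    have := hWsub i ((hQmem i z).1 hz x hx)
    rwa [mem_preimage, hx] at this
  have hQord : ∀ z, {i | z ∈ Q i}.ncard ≤ n + 1 := by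
    intro z
    obtain ⟨x, hx⟩ := hsurj z
    have h1 : {i | z ∈ Q i} ⊆ {i | x ∈ W i} := fun i hi => (hQmem i z).1 hi x hx
    exact le_trans (Set.ncard_le_ncard h1 (Set.toFinite _)) (hWord x)
  set N : Set Y := (⋃ i, Q i)ᶜ with hNdef
  have hNc : IsClosed N := (isOpen_iUnion hQo).isClosed_compl
  set F : Fin k → Set Y := fun i => f '' closure (v i) with hFdef
  have hFc : ∀ i, IsClosed (F i) := fun i => hclosed _ isClosed_closure
  -- The step lemma: cover the relevant part of N ∩ F i by an open set with
  -- frontier absorbed by Q i, avoiding a given closed set A.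
  have step : ∀ (i : Fin k) (A G : Set Y), IsClosed A → IsOpen G →
      A ⊆ G ∪ ⋃ i', Q i' →
      ∃ P : Set Y, IsOpen P ∧ P ⊆ U i ∧ P ∩ A = ∅ ∧ closure P ⊆ P ∪ Q i ∧
        (N ∩ F i) \ G ⊆ P := by
    intro i A G hA hG hAG
    set K : Set Y := (N ∩ F i) \ G with hKdef
    have hKc : IsCompact K := ((hNc.inter (hFc i)).sdiff hG).isCompact
    have hO : ∀ y ∈ K, ∃ O : Set Y, IsOpen O ∧ y ∈ O ∧ O ⊆ U i ∩ Aᶜ ∧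
        f ⁻¹' (frontier O) ⊆ W i := by
      rintro y ⟨⟨hyN, hyF⟩, hyG⟩
      obtain ⟨x, hxv, hxy⟩ := hyF
      have hxW : x ∈ W i := hvcl i hxv
      have hyA : y ∉ A := by
        intro hyA
        rcases hAG hyA with h1 | h1
        · exact hyG h1
        · exact hyN h1
      have hyU : y ∈ U i := by
        have := hWsub i hxW
        rwa [mem_preimage, hxy] at this
      obtain ⟨O, hOo, hyO, hOsub, hOfr⟩ :=
        hr x (W i) (U i ∩ Aᶜ) (hWo i) hxW ((hUo i).inter hA.isOpen_compl)
          (by rw [hxy]; exact ⟨hyU, hyA⟩)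
      exact ⟨O, hOo, by rwa [hxy] at hyO, hOsub, hOfr⟩
    choose! O hOo hyO hOsub hOfr using hO
    obtain ⟨t, htK, htfin, htcov⟩ :=
      hKc.elim_finite_subcover_image (fun y hy => hOo y hy)
        (fun y hy => mem_biUnion hy (hyO y hy))
    refine ⟨⋃ y ∈ t, O y, isOpen_biUnion fun y hy => hOo y (htK hy), ?_, ?_, ?_, htcov⟩
    · exact iUnion₂_subset fun y hy => (subset_inter_iff.1 (hOsub y (htK hy))).1
    · apply eq_empty_of_forall_notMem
      rintro z ⟨hz1, hz2⟩
      obtain ⟨y, hy, hzy⟩ := mem_iUnion₂.1 hz1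
      exact (hOsub y (htK hy) hzy).2 hz2
    · rw [htfin.closure_biUnion]
      apply iUnion₂_subset
      intro y hy
      have hcl : closure (O y) ⊆ O y ∪ frontier (O y) := by
        intro z hz
        by_cases hzO : z ∈ O y
        · exact Or.inl hzO
        · exact Or.inr ⟨hz, fun hzint => hzO (interior_subset hzint)⟩  -- frontier mem?
      intro z hz
      rcases hcl hz with hz1 | hz1
      · exact Or.inl (mem_biUnion hy hz1)
      · right
        rw [hQmem]
        intro x hxz
        exact hOfr y (htK hy) (by rw [mem_preimage, hxz]; exact hz1)
  -- Recursively build the family P of open sets covering N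
  set Good : (Fin k → Set Y) → Fin k → Prop := fun P i =>
    IsOpen (P i) ∧ P i ⊆ U i ∧ (∀ i', i' < i → P i ∩ closure (P i') = ∅) ∧
      closure (P i) ⊆ P i ∪ Q i ∧
      (N ∩ F i) \ (⋃ i' ∈ {i' | i' < i}, P i') ⊆ P i with hGooddef
  have hrec : ∀ j : ℕ, j ≤ k → ∃ P : Fin k → Set Y,
      ∀ i : Fin k, (i : ℕ) < j → Good P i := by
    intro j
    induction j with
    | zero => exact fun _ => ⟨fun _ => ∅, fun i hi => absurd hi (Nat.not_lt_zero _)⟩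
    | succ j ih =>
      intro hj
      obtain ⟨P, hP⟩ := ih (Nat.le_of_succ_le hj)
      set ij : Fin k := ⟨j, hj⟩ with hijdef
      set A : Set Y := ⋃ i' ∈ {i' | i' < ij}, closure (P i') with hAdef
      set G : Set Y := ⋃ i' ∈ {i' | i' < ij}, P i' with hGdef
      have hAc : IsClosed A :=
        (Set.toFinite {i' | i' < ij}).isClosed_biUnion fun i' _ => isClosed_closure
      have hGo : IsOpen G := isOpen_biUnion fun i' hi' => (hP i' hi').1
      have hAG : A ⊆ G ∪ ⋃ i', Q i' := by
        intro z hz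
        obtain ⟨i', hi', hz'⟩ := mem_iUnion₂.1 hz
        have hGi' := hP i' hi'
        rcases hGi'.2.2.2.1 hz' with h1 | h1
        · exact Or.inl (mem_biUnion hi' h1)
        · exact Or.inr (mem_iUnion.2 ⟨i', h1⟩)
      obtain ⟨Pn, hPno, hPnU, hPnA, hPncl, hPnK⟩ := step ij A G hAc hGo hAG
      refine ⟨Function.update P ij Pn, ?_⟩
      intro i hi
      rcases Nat.lt_succ_iff_lt_or_eq.1 hi with hi' | hi'
      · -- i < j : old indices, unchanged
        have hne : i ≠ ij := Fin.ne_of_val_ne (Nat.ne_of_lt hi')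
        have heq : Function.update P ij Pn i = P i := Function.update_of_ne hne _ _
        have hold := hP i hi'
        refine ⟨by rw [heq]; exact hold.1, by rw [heq]; exact hold.2.1, ?_, ?_, ?_⟩
        · intro i'' hi''
          have hne'' : i'' ≠ ij := by
            refine Fin.ne_of_val_ne (Nat.ne_of_lt ?_)
            exact lt_trans hi'' hi'
          rw [heq, Function.update_of_ne hne'' _ _]
          exact hold.2.2.1 i'' hi''
        · rw [heq]; exact hold.2.2.2.1
        · have hsame : (⋃ i'' ∈ {i'' | i'' < i}, Function.update P ij Pn i'')
              = ⋃ i'' ∈ {i'' | i'' < i}, P i'' := by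
            apply iUnion₂_congr
            intro i'' hi''
            exact Function.update_of_ne
              (Fin.ne_of_val_ne (Nat.ne_of_lt (lt_trans hi'' hi'))) _ _
          rw [heq, hsame]
          exact hold.2.2.2.2
      · -- i = j : i = ij, the new index
        have hii : i = ij := Fin.val_injective hi'
        have heq : Function.update P ij Pn i = Pn := by
          rw [hii]; exact Function.update_self _ _ _
        refine ⟨by rw [heq]; exact hPno, by rw [heq, hii]; exact hPnU, ?_, ?_, ?_⟩
        · intro i'' hi''
          have hne'' : i'' ≠ ij := by rw [← hii]; exact ne_of_lt hi''
          rw [heq, Function.update_of_ne hne'' _ _]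
          apply eq_empty_of_forall_notMem
          rintro z ⟨hz1, hz2⟩
          have hzA : z ∈ Pn ∩ A :=
            ⟨hz1, mem_biUnion (show i'' ∈ {i' | i' < ij} from hii ▸ hi'') hz2⟩
          rw [hPnA] at hzA
          exact hzA
        · rw [heq, hii]; exact hPncl
        · have hsame : (⋃ i'' ∈ {i'' | i'' < i}, Function.update P ij Pn i'')
              = ⋃ i'' ∈ {i'' | i'' < i}, P i'' := by
            apply iUnion₂_congr
            intro i'' hi''
            exact Function.update_of_ne (by rw [← hii]; exact ne_of_lt hi'') _ _
          rw [heq, hsame, hii]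
          exact hPnK
  obtain ⟨P, hPgood⟩ := hrec k le_rfl
  have hGP : ∀ i : Fin k, Good P i := fun i => hPgood i i.isLt
  have hPo : ∀ i, IsOpen (P i) := fun i => (hGP i).1
  have hPU : ∀ i, P i ⊆ U i := fun i => (hGP i).2.1
  have hPdis : ∀ i i', i' < i → P i ∩ closure (P i') = ∅ := fun i i' h' => (hGP i).2.2.1 i' h'
  have hPcl : ∀ i, closure (P i) ⊆ P i ∪ Q i := fun i => (hGP i).2.2.2.1
  have hPK : ∀ i, (N ∩ F i) \ (⋃ i' ∈ {i' | i' < i}, P i') ⊆ P i := fun i => (hGP i).2.2.2.2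
  -- N is covered by the P i
  have hNP : N ⊆ ⋃ i, P i := by
    intro z hz
    by_contra hzP
    obtain ⟨x, hx⟩ := hsurj z
    have hxv : x ∈ ⋃ i, v i := hvcov (mem_univ x)
    obtain ⟨i0, hi0⟩ := mem_iUnion.1 hxv
    have hzF : z ∈ F i0 := ⟨x, subset_closure hi0, hx⟩
    have hzG : z ∉ ⋃ i' ∈ {i' | i' < i0}, P i' := by
      intro hzG
      obtain ⟨i', _, hz'⟩ := mem_iUnion₂.1 hzG
      exact hzP (mem_iUnion.2 ⟨i', hz'⟩)
    exact hzP (mem_iUnion.2 ⟨i0, hPK i0 ⟨⟨hz, hzF⟩, hzG⟩⟩)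
  -- The residues D i and the final cover
  set D : Fin k → Set Y := fun i => closure (P i) \ Q i with hDdef
  have hDP : ∀ i, D i ⊆ P i := by
    intro i z hz
    rcases hPcl i hz.1 with h1 | h1
    · exact h1
    · exact absurd h1 hz.2
  have hDdis : ∀ i i', i ≠ i' → ∀ z, z ∈ D i → z ∈ D i' → False := by
    have key : ∀ i i', i' < i → ∀ z, z ∈ D i → z ∈ D i' → False := by
      intro i i' hlt z hzi hzi'
      have : z ∈ P i ∩ closure (P i') := ⟨hDP i hzi, hzi'.1⟩
      rw [hPdis i i' hlt] at this
      exact this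
    intro i i' hne z hzi hzi'
    rcases lt_or_gt_of_ne hne with h1 | h1
    · exact key i' i h1 z hzi' hzi
    · exact key i i' h1 z hzi hzi'
  set U' : Fin k → Set Y := fun i =>
    (Q i \ ⋃ j, D j) ∪ (P i \ ⋃ j ∈ {j | j ≠ i}, D j) with hU'def
  have hDc : ∀ i, IsClosed (D i) := fun i => isClosed_closure.sdiff (hQo i)
  have hU'o : ∀ i, IsOpen (U' i) := by
    intro i
    apply IsOpen.union
    · exact (hQo i).sdiff (isClosed_iUnion_of_finite hDc)
    · exact (hPo i).sdiff ((Set.toFinite {j | j ≠ i}).isClosed_biUnion fun j _ => hDc j)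
  have hU'sub : ∀ i, U' i ⊆ U i := by
    intro i z hz
    rcases hz with hz | hz
    · exact hQsub i hz.1
    · exact hPU i hz.1
  have hU'cov : (⋃ i, U' i) = univ := by
    apply eq_univ_of_forall
    intro z
    by_cases hzD : ∃ mm, z ∈ D mm
    · obtain ⟨mm, hzm⟩ := hzD
      refine mem_iUnion.2 ⟨mm, Or.inr ⟨hDP mm hzm, ?_⟩⟩
      intro hzj
      obtain ⟨j, hji, hzj'⟩ := mem_iUnion₂.1 hzj
      exact hDdis j mm hji z hzj' hzm
    · push_neg at hzD
      by_cases hzQ : ∃ i, z ∈ Q i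
      · obtain ⟨i, hzi⟩ := hzQ
        refine mem_iUnion.2 ⟨i, Or.inl ⟨hzi, ?_⟩⟩
        intro hzj
        obtain ⟨j, hzj'⟩ := mem_iUnion.1 hzj
        exact hzD j hzj'
      · have hzN : z ∈ N := by
          rw [hNdef, mem_compl_iff]
          intro hzu
          obtain ⟨i, hzi⟩ := mem_iUnion.1 hzu
          exact hzQ ⟨i, hzi⟩
        obtain ⟨i, hzi⟩ := mem_iUnion.1 (hNP hzN)
        refine mem_iUnion.2 ⟨i, Or.inr ⟨hzi, ?_⟩⟩
        intro hzj
        obtain ⟨j, hji, hzj'⟩ := mem_iUnion₂.1 hzj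
        exact hzD j hzj'
  have hU'ord : ∀ z : Y, {i | z ∈ U' i}.ncard ≤ n + 1 := by
    intro z
    by_cases hzD : ∃ mm, z ∈ D mm
    · obtain ⟨mm, hzm⟩ := hzD
      have hsub : {i | z ∈ U' i} ⊆ {mm} := by
        intro i hi
        rcases hi with hi | hi
        · exact absurd (mem_iUnion.2 ⟨mm, hzm⟩) hi.2
        · by_contra hne
          exact hi.2 (mem_biUnion (by exact fun hh => hne (by rw [mem_singleton_iff]; exact (hh ▸ rfl : i = mm)) : mm ≠ i) hzm)
      calc {i | z ∈ U' i}.ncard ≤ ({mm} : Set (Fin k)).ncard :=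
            Set.ncard_le_ncard hsub (Set.toFinite _)
        _ = 1 := Set.ncard_singleton mm
        _ ≤ n + 1 := Nat.le_add_left 1 n
    · push_neg at hzD
      have hsub : {i | z ∈ U' i} ⊆ {i | z ∈ Q i} := by
        intro i hi
        rcases hi with hi | hi
        · exact hi.1
        · by_contra hzQ
          exact hzD i ⟨subset_closure hi.1, hzQ⟩
      exact le_trans (Set.ncard_le_ncard hsub (Set.toFinite _)) (hQord z)
  exact ⟨k, U', hU'o, hU'cov, fun j => ⟨j, hU'sub j⟩, hU'ord⟩
end

section
/- Let X, M, A, B be subsets of a normal space X with M, A, B closed, A ∩ B = ∅, and let L be a partition in M between M ∩ A and M ∩ B. If X \ L is a normal subspace, then there exist disjoint open sets U, V ⊆ X such that A ⊆ U, B ⊆ V, M \ L = (U ∪ V) ∩ M, and cl(U) ∩ cl(V) ⊆ L. -/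
open Set Topology

variable {X Y : Type*} [TopologicalSpace X] [TopologicalSpace Y]

theorem statement10 {X : Type*} [TopologicalSpace X] [NormalSpace X]
    (M A B L : Set X) (hM : IsClosed M) (hA : IsClosed A) (hB : IsClosed B)
    (hAB : Disjoint A B) (hLM : L ⊆ M) (hLcl : IsClosed L)
    (hpart : ∃ U' V' : Set X, IsOpen U' ∧ IsOpen V' ∧ Disjoint (U' ∩ M) (V' ∩ M) ∧
      M \ L = (U' ∪ V') ∩ M ∧ A ∩ M ⊆ U' ∧ B ∩ M ⊆ V')
    (hnorm : NormalSpace ↥(Lᶜ : Set X)) :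
    ∃ U V : Set X, IsOpen U ∧ IsOpen V ∧ Disjoint U V ∧ A ⊆ U ∧ B ⊆ V ∧
      M \ L = (U ∪ V) ∩ M ∧ closure U ∩ closure V ⊆ L := by
  obtain ⟨U', V', hU'o, hV'o, hdisj', hML, hAU', hBV'⟩ := hpart
  have hZo : IsOpen (Lᶜ) := hLcl.isOpen_compl
  -- L is disjoint from U' and V'
  have hLU' : ∀ x, x ∈ L → x ∉ U' := by
    intro x hxL hxU'
    have : x ∈ M \ L := by rw [hML]; exact ⟨Or.inl hxU', hLM hxL⟩
    exact this.2 hxL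
  have hLV' : ∀ x, x ∈ L → x ∉ V' := by
    intro x hxL hxV'
    have : x ∈ M \ L := by rw [hML]; exact ⟨Or.inr hxV', hLM hxL⟩
    exact this.2 hxL
  have hAZ : A ⊆ Lᶜ := fun x hx hxL => hLU' x hxL (hAU' ⟨hx, hLM hxL⟩)
  have hBZ : B ⊆ Lᶜ := fun x hx hxL => hLV' x hxL (hBV' ⟨hx, hLM hxL⟩)
  -- closed sets in the subspace Z = Lᶜ
  set K₁ : Set ↥(Lᶜ : Set X) := Subtype.val ⁻¹' (A ∪ (M ∩ V'ᶜ)) with hK₁def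
  set K₂ : Set ↥(Lᶜ : Set X) := Subtype.val ⁻¹' (B ∪ (M ∩ U'ᶜ)) with hK₂def
  have hK₁ : IsClosed K₁ :=
    (hA.union (hM.inter hV'o.isClosed_compl)).preimage continuous_subtype_val
  have hK₂ : IsClosed K₂ :=
    (hB.union (hM.inter hU'o.isClosed_compl)).preimage continuous_subtype_val
  have hKdisj : Disjoint K₁ K₂ := by
    rw [Set.disjoint_left]
    rintro ⟨x, hxZ⟩ h1 h2
    simp only [hK₁def, hK₂def, mem_preimage] at h1 h2
    rcases h1 with hx1 | ⟨hxM, hxV'⟩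
    · rcases h2 with hx2 | ⟨hxM, hxU'⟩
      · exact hAB.le_bot ⟨hx1, hx2⟩
      · exact hxU' (hAU' ⟨hx1, hxM⟩)
    · rcases h2 with hx2 | ⟨_, hxU'⟩
      · exact hxV' (hBV' ⟨hx2, hxM⟩)
      · have : x ∈ M \ L := ⟨hxM, hxZ⟩
        rw [hML] at this
        rcases this.1 with h | h
        · exact hxU' h
        · exact hxV' h
  -- first separation
  obtain ⟨W₁, W₂, hW₁o, hW₂o, hKW₁, hKW₂, hWd⟩ := hnorm.normal K₁ K₂ hK₁ hK₂ hKdisj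
  -- second separation: K₁ vs closure W₂
  have hclW₂ : IsClosed (closure W₂) := isClosed_closure
  have hd2 : Disjoint K₁ (closure W₂) := by
    have : closure W₂ ⊆ W₁ᶜ :=
      closure_minimal (Set.disjoint_right.mp hWd) hW₁o.isClosed_compl |>.trans (le_refl _)
    exact Set.disjoint_left.mpr fun x hx hxc => this hxc (hKW₁ hx)
  obtain ⟨T₁, T₂, hT₁o, hT₂o, hKT₁, hcT₂, hTd⟩ := hnorm.normal K₁ (closure W₂) hK₁ hclW₂ hd2
  -- closures of T₁ and W₂ are disjoint
  have hclTW : Disjoint (closure T₁) (closure W₂) := by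
    have h1 : closure T₁ ⊆ T₂ᶜ :=
      closure_minimal (fun x hx => Set.disjoint_left.mp hTd hx) hT₂o.isClosed_compl
    exact Set.disjoint_left.mpr fun x hx hxc => h1 hx (hcT₂ hxc)
  -- push to X
  refine ⟨Subtype.val '' T₁, Subtype.val '' W₂,
    hZo.isOpenMap_subtype_val T₁ hT₁o, hZo.isOpenMap_subtype_val W₂ hW₂o, ?_, ?_, ?_, ?_, ?_⟩
  · exact (Set.disjoint_image_of_injective Subtype.val_injective
      (hclTW.mono subset_closure subset_closure))
  · intro x hx
    exact ⟨⟨x, hAZ hx⟩, hKT₁ (by simp [hK₁def, hx]), rfl⟩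
  · intro x hx
    exact ⟨⟨x, hBZ hx⟩, hKW₂ (by simp [hK₂def, hx]), rfl⟩
  · ext x
    constructor
    · rintro ⟨hxM, hxL⟩
      refine ⟨?_, hxM⟩
      have hx' : x ∈ (U' ∪ V') ∩ M := by rw [← hML]; exact ⟨hxM, hxL⟩
      rcases hx'.1 with h | h
      · left
        refine ⟨⟨x, hxL⟩, hKT₁ ?_, rfl⟩
        exact Or.inr ⟨hxM, fun hV => hdisj'.le_bot ⟨⟨h, hxM⟩, ⟨hV, hxM⟩⟩⟩
      · right
        refine ⟨⟨x, hxL⟩, hKW₂ ?_, rfl⟩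
        exact Or.inr ⟨hxM, fun hU => hdisj'.le_bot ⟨⟨hU, hxM⟩, ⟨h, hxM⟩⟩⟩
    · rintro ⟨hx, hxM⟩
      refine ⟨hxM, ?_⟩
      rcases hx with ⟨⟨y, hy⟩, _, rfl⟩ | ⟨⟨y, hy⟩, _, rfl⟩ <;> exact hy
  · intro x ⟨hxT, hxW⟩
    by_contra hxL
    have h1 : (⟨x, hxL⟩ : ↥(Lᶜ : Set X)) ∈ closure T₁ := closure_subtype.mpr hxT
    have h2 : (⟨x, hxL⟩ : ↥(Lᶜ : Set X)) ∈ closure W₂ := closure_subtype.mpr hxW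
    exact hclTW.le_bot ⟨h1, h2⟩
end

section
/- Let f : X → Y be a fully closed continuous map from a normal space X, and let L ⊆ X be a closed Gδ-set. Then f(L) ∩ f(X \ L) is a countable union of subsets of Y each of which is closed and discrete in Y. -/
open Set Topology

variable {X Y : Type*} [TopologicalSpace X] [TopologicalSpace Y]

/-! Writing `L = ⋂ₙ Uₙ` with `Uₙ` open, the complement `Lᶜ` is the union of the closed sets
`Uₙᶜ`, each disjoint from `L`. Hence `f(L) ∩ f(Lᶜ) = ⋃ₙ f(L) ∩ f(Uₙᶜ)`, and every term is closed
because `f` is closed, and discrete because `f` is fully closed. -/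

theorem IsGδ.exists_isClosed_compl_eq_iUnion {L : Set X} (hL : IsGδ L) :
    ∃ F : ℕ → Set X, (∀ n, IsClosed (F n)) ∧ Lᶜ = ⋃ n, F n := by
  obtain ⟨U, hUopen, rfl⟩ := hL.eq_iInter_nat
  exact ⟨fun n => (U n)ᶜ, fun n => (hUopen n).isClosed_compl, compl_iInter U⟩

theorem IsFullyClosedMap.isClosed_discrete_image_inter_image {f : X → Y}
    (hfc : IsFullyClosedMap f) (hcl : IsClosedMap f) {F G : Set X} (hF : IsClosed F)
    (hG : IsClosed G) (hFG : Disjoint F G) :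
    IsClosed (f '' F ∩ f '' G) ∧ DiscreteTopology ↥(f '' F ∩ f '' G) :=
  ⟨(hcl F hF).inter (hcl G hG), hfc F G hF hG hFG⟩

theorem statement11_general {X Y : Type*} [TopologicalSpace X] [TopologicalSpace Y]
    (f : X → Y) (hcl : IsClosedMap f)
    (hfc : IsFullyClosedMap f)
    (L : Set X) (hL : IsClosed L) (hGd : IsGδ L) :
    ∃ D : ℕ → Set Y, (∀ n, IsClosed (D n) ∧ DiscreteTopology ↥(D n)) ∧
      f '' L ∩ f '' Lᶜ = ⋃ n, D n := by
  obtain ⟨F, hF, hLF⟩ := hGd.exists_isClosed_compl_eq_iUnion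
  have hdisj : ∀ n, Disjoint L (F n) := fun n =>
    subset_compl_iff_disjoint_left.mp ((subset_iUnion F n).trans hLF.ge)
  refine ⟨fun n => f '' L ∩ f '' F n,
    fun n => hfc.isClosed_discrete_image_inter_image hcl hL (hF n) (hdisj n), ?_⟩
  rw [hLF, image_iUnion, inter_iUnion]

theorem statement11 {X Y : Type*} [TopologicalSpace X] [TopologicalSpace Y]
    [NormalSpace X]
    (f : X → Y) (hf : Continuous f) (hcl : IsClosedMap f)
    (hfc : IsFullyClosedMap f)
    (L : Set X) (hL : IsClosed L) (hGd : IsGδ L) :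
    ∃ D : ℕ → Set Y, (∀ n, IsClosed (D n) ∧ DiscreteTopology ↥(D n)) ∧
      f '' L ∩ f '' Lᶜ = ⋃ n, D n :=
  statement11_general f hcl hfc L hL hGd
end

section
/- Let f be a fully closed continuous map from a normal space X onto a space Y in which every closed discrete subspace is a Gδ-set, and let L ⊆ X be a closed Gδ-set. Then f(L) is a Gδ-set in Y. -/
open Set Topology

variable {X Y : Type*} [TopologicalSpace X] [TopologicalSpace Y]

theorem statement12 {X Y : Type*} [TopologicalSpace X] [TopologicalSpace Y]
    [NormalSpace X]
    (f : X → Y) (hf : Continuous f) (hcl : IsClosedMap f)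
    (hsurj : Function.Surjective f) (hfc : IsFullyClosedMap f)
    (hY : ∀ D : Set Y, IsClosed D → DiscreteTopology ↥D → IsGδ D)
    (L : Set X) (hL : IsClosed L) (hGd : IsGδ L) :
    IsGδ (f '' L) := by
  obtain ⟨U, hUopen, rfl⟩ := hGd.eq_iInter_nat
  set L : Set X := ⋂ n, U n with hLdef
  have hLU : ∀ n, L ⊆ U n := fun n => iInter_subset U n
  have key : f '' L = ⋂ n, ((f '' (U n)ᶜ)ᶜ ∪ (f '' L ∩ f '' (U n)ᶜ)) := by
    apply Set.Subset.antisymm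
    · intro y hy
      refine mem_iInter.2 fun n => ?_
      by_cases h : y ∈ f '' (U n)ᶜ
      · exact Or.inr ⟨hy, h⟩
      · exact Or.inl h
    · intro y hy
      obtain ⟨x, rfl⟩ := hsurj y
      by_cases hx : x ∈ L
      · exact ⟨x, hx, rfl⟩
      · obtain ⟨n, hn⟩ : ∃ n, x ∉ U n := by
          by_contra h; push_neg at h; exact hx (mem_iInter.2 h)
        have := mem_iInter.1 hy n
        rcases this with h | h
        · exact absurd ⟨x, hn, rfl⟩ h
        · exact h.1
  rw [key]
  refine IsGδ.iInter fun n => ?_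
  have hGc : IsClosed ((U n)ᶜ) := (hUopen n).isClosed_compl
  have hdisj : Disjoint L ((U n)ᶜ) := disjoint_compl_right_iff_subset.2 (hLU n)
  have hdisc : DiscreteTopology ↥(f '' L ∩ f '' (U n)ᶜ) := hfc L ((U n)ᶜ) hL hGc hdisj
  have hclosed : IsClosed (f '' L ∩ f '' (U n)ᶜ) := (hcl L hL).inter (hcl _ hGc)
  exact IsGδ.union ((hcl _ hGc).isOpen_compl.isGδ) (hY _ hclosed hdisc)
end

section
/- Let X be a weak Cook continuum, P a subcontinuum of X, and f : P → X a non-constant continuous map. Then f(P) ⊆ P and f is a monotone retraction of P (f restricted to f(P) is the identity and all fibers of f are subcontinua). -/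
open Set Topology

variable {X Y : Type*} [TopologicalSpace X] [TopologicalSpace Y]

/-!
Let `x = f p` and let `C` be the component of `p` in the fibre `f⁻¹(x)`; it suffices to show
`x ∈ C`, since then all three claims follow. Otherwise choose neighbourhoods `O ⊇ C` and `V ∋ x`
whose closures are disjoint on `P`, and let `W = cl O ∩ f⁻¹(cl V)`. Every subcontinuum of `W` is
mapped off itself, so `f` is constant on it by the weak Cook property. Applied to `P` this shows
`W ≠ P`; applied to the component `K` of `p` in `W` it gives `K ⊆ C`, so `K` lies in the open set
`O ∩ f⁻¹(V) ⊆ W`, contradicting boundary bumping.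
-/

/-- The weak Cook property alone: `X` is not required to be a non-degenerate continuum. -/
def IsWeakCook (X : Type*) [TopologicalSpace X] : Prop :=
  ∀ P : Set X, IsSubcontinuum P → ∀ g : ↥P → X, Continuous g →
    P ∩ Set.range g = ∅ → ∃ c : X, ∀ p : ↥P, g p = c

theorem isClosed_connectedComponentIn {F : Set X} (hF : IsClosed F) (x : X) :
    IsClosed (connectedComponentIn F x) := by
  by_cases hx : x ∈ F
  · refine isClosed_of_closure_subset <|
      isPreconnected_connectedComponentIn.closure.subset_connectedComponentIn
        (subset_closure (mem_connectedComponentIn hx)) ?_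
    exact closure_minimal (connectedComponentIn_subset F x) hF
  · simp [connectedComponentIn_eq_empty hx]

theorem exists_isClopen_mem_subset_of_connectedComponent_subset [CompactSpace X] [T2Space X]
    {x : X} {U : Set X} (hU : IsOpen U) (h : connectedComponent x ⊆ U) :
    ∃ Z : Set X, IsClopen Z ∧ x ∈ Z ∧ Z ⊆ U := by
  let ι := {s : Set X // IsClopen s ∧ x ∈ s}
  have : Nonempty ι := ⟨⟨univ, isClopen_univ, mem_univ x⟩⟩
  have hdir : Directed (· ⊇ ·) (fun s : ι => (s : Set X)) := fun s t =>
    ⟨⟨s ∩ t, s.2.1.inter t.2.1, s.2.2, t.2.2⟩, inter_subset_left, inter_subset_right⟩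
  obtain ⟨s, hs⟩ := exists_subset_nhds_of_compactSpace hdir (fun s => s.2.1.isClosed)
    fun y hy => hU.mem_nhds (h (by rwa [connectedComponent_eq_iInter_isClopen]))
  exact ⟨s, s.2.1, s.2.2, hs⟩

theorem IsClosed.eq_univ_of_connectedComponentIn_subset_interior [CompactSpace X] [T2Space X]
    [PreconnectedSpace X] {W : Set X} (hW : IsClosed W) {p : X} (hp : p ∈ W)
    (h : connectedComponentIn W p ⊆ interior W) : W = univ := by
  have : CompactSpace W := isCompact_iff_compactSpace.mp hW.isCompact
  obtain ⟨Z, hZ, hpZ, hZW⟩ :=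
    exists_isClopen_mem_subset_of_connectedComponent_subset (x := ⟨p, hp⟩)
      (isOpen_interior.preimage continuous_subtype_val)
      fun q hq => h (connectedComponentIn_eq_image hp ▸ mem_image_of_mem _ hq)
  have hZo : IsOpen (Subtype.val '' Z) := isOpen_iff_mem_nhds.2 fun _ ⟨z, hz, hzq⟩ => by
    rw [← hzq, ← nhdsWithin_eq_nhds.2 (mem_interior_iff_mem_nhds.1 (hZW hz))]
    exact mem_nhds_subtype_iff_nhdsWithin.1 (hZ.isOpen.mem_nhds hz)
  have hZc : IsClosed (Subtype.val '' Z) :=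
    (hZ.isClosed.isCompact.image continuous_subtype_val).isClosed
  exact eq_univ_of_univ_subset <| (IsClopen.eq_univ ⟨hZc, hZo⟩ ⟨p, _, hpZ, rfl⟩).ge.trans
    (Subtype.coe_image_subset W Z)

theorem exists_isOpen_disjoint_closure_inter [T2Space X] {K P : Set X} {x : X}
    (hK : IsCompact K) (hP : IsCompact P) (hx : x ∉ K) :
    ∃ O V : Set X, IsOpen O ∧ IsOpen V ∧ K ⊆ O ∧ x ∈ V ∧
      Disjoint (closure O ∩ P) (closure V) := by
  obtain ⟨O, O', hO, hO', hKO, hxO', hOO'⟩ :=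
    SeparatedNhds.of_isCompact_isCompact hK isCompact_singleton (disjoint_singleton_right.2 hx)
  have hxO : x ∉ closure O ∩ P := fun h =>
    disjoint_left.1 (hOO'.closure_left hO') h.1 (hxO' rfl)
  obtain ⟨U, V, hU, hV, hOU, hxV, hUV⟩ := SeparatedNhds.of_isCompact_isCompact
    (hP.inter_left isClosed_closure) isCompact_singleton (disjoint_singleton_right.2 hxO)
  exact ⟨O, V, hO, hV, hKO, hxV rfl, (hUV.closure_right hU).mono_left hOU⟩

theorem IsWeakCook.subsingleton_image (hX : IsWeakCook X) {P : Set X} {f : P → X}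
    (hf : Continuous f) {Q : Set P} (hQc : IsCompact Q) (hQ : IsConnected Q)
    (hdisj : Disjoint (Subtype.val '' Q) (f '' Q)) : (f '' Q).Subsingleton := by
  let g : Subtype.val '' Q → X := fun y => f ⟨y, Subtype.coe_image_subset P Q y.2⟩
  have hrange : range g ⊆ f '' Q := by
    rintro _ ⟨⟨_, q, hq, rfl⟩, rfl⟩
    exact ⟨q, hq, rfl⟩
  obtain ⟨c, hc⟩ := hX _ ⟨hQc.image continuous_subtype_val,
      hQ.image _ continuous_subtype_val.continuousOn⟩ g (by fun_prop)
    (disjoint_iff_inter_eq_empty.1 (hdisj.mono_right hrange))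
  rintro _ ⟨q, hq, rfl⟩ _ ⟨q', hq', rfl⟩
  exact (hc ⟨q, q, hq, rfl⟩).trans (hc ⟨q', q', hq', rfl⟩).symm

theorem IsWeakCook.mem_image_connectedComponentIn_fiber [T2Space X] (hX : IsWeakCook X)
    {P : Set X} (hP : IsSubcontinuum P) {f : P → X} (hf : Continuous f)
    (hnc : ¬ ∃ c : X, ∀ p : P, f p = c) (p : P) :
    f p ∈ Subtype.val '' connectedComponentIn (f ⁻¹' {f p}) p := by
  have : CompactSpace P := isCompact_iff_compactSpace.mp hP.1
  have : ConnectedSpace P := Subtype.connectedSpace hP.2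
  set C := connectedComponentIn (f ⁻¹' {f p}) p
  by_contra hfp
  have hC : IsCompact (Subtype.val '' C) :=
    (isClosed_connectedComponentIn (isClosed_singleton.preimage hf) p).isCompact.image
      continuous_subtype_val
  obtain ⟨O, V, hO, hV, hCO, hxV, hOV⟩ := exists_isOpen_disjoint_closure_inter hC hP.1 hfp
  set W : Set P := Subtype.val ⁻¹' closure O ∩ f ⁻¹' closure V
  have hW : IsClosed W :=
    (isClosed_closure.preimage continuous_subtype_val).inter (isClosed_closure.preimage hf)
  have hpC : p ∈ C := mem_connectedComponentIn rfl
  have hpW : p ∈ W := ⟨subset_closure (hCO (mem_image_of_mem _ hpC)), subset_closure hxV⟩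
  have hconst : ∀ Q ⊆ W, IsCompact Q → IsConnected Q → (f '' Q).Subsingleton :=
    fun Q hQW hQc hQ => hX.subsingleton_image hf hQc hQ <| hOV.mono
      (by rintro _ ⟨q, hq, rfl⟩; exact ⟨(hQW hq).1, q.2⟩)
      (by rintro _ ⟨q, hq, rfl⟩; exact (hQW hq).2)
  have hWne : W ≠ univ := fun hWu => hnc ⟨f p, fun q => hconst univ hWu.ge isCompact_univ
    isConnected_univ ⟨q, trivial, rfl⟩ ⟨p, trivial, rfl⟩⟩
  set K := connectedComponentIn W p
  have hKC : K ⊆ C := isPreconnected_connectedComponentIn.subset_connectedComponentIn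
    (mem_connectedComponentIn hpW) fun q hq =>
      hconst K (connectedComponentIn_subset W p) (isClosed_connectedComponentIn hW p).isCompact
        (isConnected_connectedComponentIn_iff.2 hpW) ⟨q, hq, rfl⟩
        ⟨p, mem_connectedComponentIn hpW, rfl⟩
  have hCN : C ⊆ Subtype.val ⁻¹' O ∩ f ⁻¹' V := fun q hq => by
    have hfq : q ∈ f ⁻¹' {f p} := connectedComponentIn_subset _ _ hq
    exact ⟨hCO (mem_image_of_mem _ hq), show f q ∈ V from hfq ▸ hxV⟩
  have hNW : Subtype.val ⁻¹' O ∩ f ⁻¹' V ⊆ interior W := interior_maximal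
    (inter_subset_inter (preimage_mono subset_closure) (preimage_mono subset_closure))
    ((hO.preimage continuous_subtype_val).inter (hV.preimage hf))
  exact hWne (hW.eq_univ_of_connectedComponentIn_subset_interior hpW (hKC.trans (hCN.trans hNW)))

section FibreComponents

variable {P : Set X} {f : P → X}
  (h : ∀ p, f p ∈ Subtype.val '' connectedComponentIn (f ⁻¹' {f p}) p)
include h

theorem range_subset_of_mem_image_connectedComponentIn_fiber : range f ⊆ P := by
  rintro _ ⟨p, rfl⟩
  obtain ⟨r, -, hr⟩ := h p
  exact hr ▸ r.2

theorem apply_eq_self_of_mem_image_connectedComponentIn_fiber (p : P) (hp : (p : X) ∈ range f) :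
    f p = p := by
  obtain ⟨q, hq⟩ := hp
  obtain ⟨r, hrC, hr⟩ := h q
  obtain rfl : r = p := Subtype.ext (hr.trans hq)
  exact (connectedComponentIn_subset _ _ hrC : r ∈ f ⁻¹' {f q}).trans hq

theorem isConnected_fiber_of_mem_image_connectedComponentIn_fiber :
    ∀ x ∈ range f, IsConnected {p : P | f p = x} := by
  rintro _ ⟨p, rfl⟩
  obtain ⟨r, -, hr⟩ := h p
  refine ⟨⟨p, rfl⟩, isPreconnected_of_forall r fun q hq => ?_⟩
  obtain ⟨r', hr'C, hr'⟩ := h q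
  have hfq : f q = f p := hq
  obtain rfl : r' = r := Subtype.ext (hr'.trans (hfq.trans hr.symm))
  exact ⟨_, hfq ▸ connectedComponentIn_subset _ _, hr'C, mem_connectedComponentIn rfl,
    isPreconnected_connectedComponentIn⟩

end FibreComponents

theorem statement15_general {X : Type*} [TopologicalSpace X]
    [T2Space X]
    (hwc : ∀ P : Set X, IsSubcontinuum P → ∀ g : ↥P → X, Continuous g →
      P ∩ Set.range g = ∅ → ∃ c : X, ∀ p : ↥P, g p = c)
    (P : Set X) (hP : IsSubcontinuum P)
    (f : ↥P → X) (hf : Continuous f) (hnc : ¬ ∃ c : X, ∀ p : ↥P, f p = c) :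
    Set.range f ⊆ P ∧ (∀ p : ↥P, (p : X) ∈ Set.range f → f p = (p : X)) ∧
      ∀ x ∈ Set.range f, IsConnected {p : ↥P | f p = x} := by
  have h := IsWeakCook.mem_image_connectedComponentIn_fiber (X := X) hwc hP hf hnc
  exact ⟨range_subset_of_mem_image_connectedComponentIn_fiber h,
    apply_eq_self_of_mem_image_connectedComponentIn_fiber h,
    isConnected_fiber_of_mem_image_connectedComponentIn_fiber h⟩

theorem statement15 {X : Type*} [TopologicalSpace X]
    [CompactSpace X] [T2Space X] [ConnectedSpace X] [Nontrivial X]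
    (hwc : ∀ P : Set X, IsSubcontinuum P → ∀ g : ↥P → X, Continuous g →
      P ∩ Set.range g = ∅ → ∃ c : X, ∀ p : ↥P, g p = c)
    (P : Set X) (hP : IsSubcontinuum P)
    (f : ↥P → X) (hf : Continuous f) (hnc : ¬ ∃ c : X, ∀ p : ↥P, f p = c) :
    Set.range f ⊆ P ∧ (∀ p : ↥P, (p : X) ∈ Set.range f → f p = (p : X)) ∧
      ∀ x ∈ Set.range f, IsConnected {p : ↥P | f p = x} :=
  statement15_general hwc P hP f hf hnc
end
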